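/- arXiv:0902.0354 — 9 statements merged into one kernel-verified Lean document; each statement's English description precedes it below -/
import Mathlib

section
/- Fix integers n ≥ m ≥ 1 and a constant c > 0, and define P_out(γ₀) = 1 − ∏_{i=1}^m (1 − F_{n−m+i}(c/γ₀)) for γ₀ > 0. Then lim_{γ₀ → ∞} P_out(γ₀) / F_{n−m+1}(c/γ₀) = 1; i.e., at high SNR the system outage probability is dominated by the outage probability of the first stream. -/
open Filter

noncomputable def fOut (k : ℕ) (x : ℝ) : ℝ :=
  1 - Real.exp (-x) * ∑ l ∈ Finset.range k, x ^ l / l.factorial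

lemma fOut_eq (k : ℕ) (x : ℝ) :
    fOut k x = Real.exp (-x) * (Real.exp x - ∑ l ∈ Finset.range k, x ^ l / l.factorial) := by
  unfold fOut
  rw [mul_sub, Real.exp_neg, inv_mul_cancel₀ (Real.exp_ne_zero x)]

lemma fOut_zero (k : ℕ) (hk : 1 ≤ k) : fOut k 0 = 0 := by
  unfold fOut
  rw [Finset.sum_eq_single 0]
  · simp
  · intro l hl hne
    simp [zero_pow hne]
  · intro h
    exact absurd (Finset.mem_range.mpr hk) h

lemma tendsto_fOut_zero (k : ℕ) (hk : 1 ≤ k) :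
    Tendsto (fun x => fOut k x) (nhdsWithin 0 (Set.Ioi 0)) (nhds 0) := by
  have hcont : Continuous (fun x => fOut k x) := by
    unfold fOut
    continuity
  have := (hcont.tendsto 0).mono_left (nhdsWithin_le_nhds (s := Set.Ioi (0:ℝ)))
  rwa [fOut_zero k hk] at this

lemma tendsto_fOut_div_pow (k : ℕ) (hk : 1 ≤ k) :
    Tendsto (fun x => fOut k x / x ^ k) (nhdsWithin 0 (Set.Ioi 0))
      (nhds (1 / k.factorial)) := by
  set C : ℝ := ((k + 1) + 1 : ℕ) / ((k+1).factorial * (k+1)) with hC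
  have habs : ∀ᶠ x : ℝ in nhds 0, |x| ≤ 1 := by
    filter_upwards [Metric.closedBall_mem_nhds (0:ℝ) one_pos] with x hx
    simpa [Real.dist_eq] using hx
  have hdiff : Tendsto (fun x : ℝ =>
      (Real.exp x - ∑ l ∈ Finset.range k, x ^ l / l.factorial) / x ^ k - 1 / k.factorial)
      (nhdsWithin 0 (Set.Ioi 0)) (nhds 0) := by
    apply squeeze_zero_norm' (a := fun x => x * C)
    · filter_upwards [habs.filter_mono nhdsWithin_le_nhds, self_mem_nhdsWithin] with x hx1 hx0
      have hxpos : (0:ℝ) < x := hx0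
      have hxk : x ^ k ≠ 0 := pow_ne_zero k (ne_of_gt hxpos)
      have hsum : (∑ l ∈ Finset.range (k+1), x ^ l / l.factorial)
          = (∑ l ∈ Finset.range k, x ^ l / l.factorial) + x ^ k / k.factorial :=
        Finset.sum_range_succ _ _
      have heq : (Real.exp x - ∑ l ∈ Finset.range k, x ^ l / l.factorial) / x ^ k
          - 1 / k.factorial
          = (Real.exp x - ∑ l ∈ Finset.range (k+1), x ^ l / l.factorial) / x ^ k := by
        rw [hsum]
        field_simp
        ring
      rw [heq, norm_div, Real.norm_eq_abs, Real.norm_eq_abs, abs_of_pos (pow_pos hxpos k)]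
      have hb := Real.exp_bound hx1 (n := k+1) (by omega)
      have : |Real.exp x - ∑ l ∈ Finset.range (k+1), x ^ l / l.factorial|
          ≤ |x| ^ (k+1) * C := by
        simpa [hC] using hb
      calc |Real.exp x - ∑ l ∈ Finset.range (k+1), x ^ l / l.factorial| / x ^ k
          ≤ (|x| ^ (k+1) * C) / x ^ k := by
            apply div_le_div_of_nonneg_right this (pow_pos hxpos k).le |>.trans_eq rfl
        _ = x * C := by
            rw [abs_of_pos hxpos, pow_succ]
            field_simp
    · have : Tendsto (fun x : ℝ => x * C) (nhds 0) (nhds (0 * C)) :=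
        (continuous_id.mul continuous_const).tendsto 0
      simpa using this.mono_left (nhdsWithin_le_nhds (s := Set.Ioi (0:ℝ)))
  have h2 : Tendsto (fun x : ℝ =>
      (Real.exp x - ∑ l ∈ Finset.range k, x ^ l / l.factorial) / x ^ k)
      (nhdsWithin 0 (Set.Ioi 0)) (nhds (1 / k.factorial)) := by
    have := hdiff.add (tendsto_const_nhds (x := (1:ℝ) / k.factorial))
    simpa using this
  have hexp : Tendsto (fun x : ℝ => Real.exp (-x)) (nhdsWithin 0 (Set.Ioi 0)) (nhds 1) := by
    have : Tendsto (fun x : ℝ => Real.exp (-x)) (nhds 0) (nhds (Real.exp (-0))) :=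
      (Real.continuous_exp.comp continuous_neg).tendsto 0
    simpa using this.mono_left (nhdsWithin_le_nhds (s := Set.Ioi (0:ℝ)))
  have := hexp.mul h2
  rw [one_mul] at this
  apply this.congr
  intro x
  rw [fOut_eq, mul_div_assoc]

lemma tendsto_prod_aux (mm : ℕ) : ∀ b : ℕ, 1 ≤ b →
    Tendsto (fun x => (1 - ∏ i ∈ Finset.range mm, (1 - fOut (b + i) x)) / x ^ b)
      (nhdsWithin 0 (Set.Ioi 0))
      (nhds (if mm = 0 then 0 else 1 / b.factorial)) := by
  induction mm with
  | zero =>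
    intro b hb
    simpa using (tendsto_const_nhds : Tendsto (fun _ : ℝ => (0:ℝ)) _ _)
  | succ mm ih =>
    intro b hb
    simp only [Nat.succ_ne_zero, if_false]
    have hidx : ∀ i : ℕ, b + (i + 1) = b + 1 + i := fun i => by omega
    have T1 := tendsto_fOut_div_pow b hb
    have T2 : Tendsto (fun x => 1 - fOut b x) (nhdsWithin 0 (Set.Ioi 0)) (nhds 1) := by
      have := (tendsto_const_nhds (x := (1:ℝ))).sub (tendsto_fOut_zero b hb)
      simpa using this
    have T3 : Tendsto (fun x : ℝ => x) (nhdsWithin 0 (Set.Ioi 0)) (nhds 0) :=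
      tendsto_id.mono_left nhdsWithin_le_nhds
    have T4 := ih (b+1) (by omega)
    have T34 := T3.mul T4
    rw [zero_mul] at T34
    have T := T1.add (T2.mul T34)
    rw [mul_zero, add_zero] at T
    apply T.congr'
    filter_upwards [self_mem_nhdsWithin] with x hx
    have hx0 : x ≠ 0 := ne_of_gt (Set.mem_Ioi.mp hx)
    have hprod : ∏ i ∈ Finset.range (mm+1), (1 - fOut (b + i) x)
        = (1 - fOut b x) * ∏ i ∈ Finset.range mm, (1 - fOut (b + 1 + i) x) := by
      rw [Finset.prod_range_succ', add_zero, mul_comm]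
      congr 1
      apply Finset.prod_congr rfl
      intro i _
      rw [hidx i]
    rw [hprod]
    have hxb : x ^ b ≠ 0 := pow_ne_zero b hx0
    field_simp
    ring

/-- At high SNR the system outage probability of coded V-BLAST with uniform power
allocation and fixed per-stream rate is dominated by the outage probability of the
first stream: `P_out(γ₀) / F_{n−m+1}(c/γ₀) → 1` as `γ₀ → ∞`. -/
theorem system_outage_dominated_by_first_stream
    (n m : ℕ) (hm : 1 ≤ m) (hmn : m ≤ n) (c : ℝ) (hc : 0 < c)
    (F : ℕ → ℝ → ℝ)
    (hF : ∀ k x, F k x = 1 - Real.exp (-x) * ∑ l ∈ Finset.range k, x ^ l / l.factorial)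
    (Pout : ℝ → ℝ)
    (hPout : ∀ γ₀, Pout γ₀ = 1 - ∏ i ∈ Finset.range m, (1 - F (n - m + (i + 1)) (c / γ₀))) :
    Tendsto (fun γ₀ => Pout γ₀ / F (n - m + 1) (c / γ₀)) atTop (nhds 1) := by
  set b : ℕ := n - m + 1 with hb
  have hb1 : 1 ≤ b := by omega
  -- the ratio as a function of x
  have hratio : Tendsto (fun x => (1 - ∏ i ∈ Finset.range m, (1 - fOut (b + i) x)) / fOut b x)
      (nhdsWithin 0 (Set.Ioi 0)) (nhds 1) := by
    have hP := tendsto_prod_aux m b hb1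
    rw [if_neg (by omega)] at hP
    have hfac : (1:ℝ) / b.factorial ≠ 0 :=
      one_div_ne_zero (by exact_mod_cast b.factorial_ne_zero)
    have hdiv := hP.div (tendsto_fOut_div_pow b hb1) hfac
    rw [div_self hfac] at hdiv
    apply hdiv.congr'
    filter_upwards [self_mem_nhdsWithin] with x hx
    have hx0 : x ≠ 0 := ne_of_gt (Set.mem_Ioi.mp hx)
    have hxb : x ^ b ≠ 0 := pow_ne_zero b hx0
    rcases eq_or_ne (fOut b x) 0 with h | h
    · simp [h]
    · simp only [Pi.div_apply]
      field_simp
  have hcomp : Tendsto (fun γ₀ : ℝ => c / γ₀) atTop (nhdsWithin 0 (Set.Ioi 0)) := by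
    rw [tendsto_nhdsWithin_iff]
    constructor
    · exact Tendsto.div_atTop tendsto_const_nhds tendsto_id
    · filter_upwards [eventually_gt_atTop 0] with γ hγ
      exact div_pos hc hγ
  have := hratio.comp hcomp
  apply this.congr
  intro γ₀
  simp only [Function.comp]
  rw [hPout γ₀]
  congr 1
  · congr 1
    apply Finset.prod_congr rfl
    intro i _
    rw [hF]
    have : n - m + (i + 1) = b + i := by omega
    rw [this]
    rfl
  · rw [hF]
    rfl
end

section
/- Fix integers n ≥ m ≥ 1 and a constant c > 0, and define P_out(γ₀) = 1 − ∏_{i=1}^m (1 − F_{n−m+i}(c/γ₀)) for γ₀ > 0. Then lim_{γ₀ → ∞} ( − ln P_out(γ₀) / ln γ₀ ) = n − m + 1; i.e., the diversity gain of coded V-BLAST with uniform (or any fixed average) power allocation and fixed per-stream rate equals n − m + 1, the same as the unoptimized system. -/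
open Filter Finset Real

-- ratio lemma
lemma expS_tendsto (j : ℕ) :
    Tendsto (fun x : ℝ => (Real.exp x - ∑ l ∈ Finset.range j, x ^ l / l.factorial) / x ^ j)
      (nhdsWithin 0 (Set.Ioi 0)) (nhds (1 / (j.factorial : ℝ))) := by
  have key : Tendsto (fun x : ℝ =>
      (Real.exp x - ∑ l ∈ Finset.range j, x ^ l / l.factorial) / x ^ j - 1 / j.factorial)
      (nhdsWithin 0 (Set.Ioi 0)) (nhds 0) := by
    have hb : Tendsto (fun x : ℝ => ((j + 2 : ℝ) / ((j+1).factorial * (j+1))) * x)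
        (nhdsWithin 0 (Set.Ioi 0)) (nhds 0) := by
      have h1 : Tendsto (fun x : ℝ => ((j + 2 : ℝ) / ((j+1).factorial * (j+1))) * x)
          (nhds 0) (nhds (((j + 2 : ℝ) / ((j+1).factorial * (j+1))) * 0)) :=
        (continuous_const.mul continuous_id).tendsto 0
      rw [mul_zero] at h1
      exact h1.mono_left nhdsWithin_le_nhds
    apply squeeze_zero_norm' _ hb
    filter_upwards [Ioo_mem_nhdsGT (by norm_num : (0:ℝ) < 1)] with x hx
    obtain ⟨hx0, hx1⟩ := hx
    have hxa : |x| ≤ 1 := by rw [abs_of_pos hx0]; linarith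
    have hB := Real.exp_bound hxa (n := j + 1) (Nat.succ_pos j)
    push_cast at hB
    have hxj : (0:ℝ) < x ^ j := pow_pos hx0 j
    have heq : (Real.exp x - ∑ l ∈ Finset.range j, x ^ l / l.factorial) / x ^ j
        - 1 / j.factorial
        = (Real.exp x - ∑ l ∈ Finset.range (j+1), x ^ l / l.factorial) / x ^ j := by
      rw [Finset.sum_range_succ]
      field_simp
      ring
    rw [Real.norm_eq_abs, heq, abs_div, abs_of_pos hxj]
    rw [div_le_iff₀ hxj]
    calc |Real.exp x - ∑ l ∈ Finset.range (j+1), x ^ l / l.factorial|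
        ≤ |x| ^ (j+1) * (((j:ℝ)+1+1) / ((j+1).factorial * ((j:ℝ)+1))) := hB
      _ = ((j + 2 : ℝ) / ((j+1).factorial * (j+1))) * x * x ^ j := by
          rw [abs_of_pos hx0]; push_cast; ring
  have := key.add_const (1 / (j.factorial : ℝ))
  simpa using this

lemma F_ratio (j : ℕ) :
    Tendsto (fun x : ℝ =>
      (1 - Real.exp (-x) * ∑ l ∈ Finset.range j, x ^ l / l.factorial) / x ^ j)
      (nhdsWithin 0 (Set.Ioi 0)) (nhds (1 / (j.factorial : ℝ))) := by
  have hexp : Tendsto (fun x : ℝ => Real.exp (-x)) (nhdsWithin 0 (Set.Ioi 0))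
      (nhds 1) := by
    have : Tendsto (fun x : ℝ => Real.exp (-x)) (nhds 0) (nhds 1) := by
      have := (Real.continuous_exp.comp continuous_neg).tendsto (0:ℝ)
      simpa [Function.comp_def] using this
    exact this.mono_left nhdsWithin_le_nhds
  have := hexp.mul (expS_tendsto j)
  rw [one_mul] at this
  apply this.congr
  intro x
  rw [← mul_div_assoc, mul_sub, ← Real.exp_add]
  simp

lemma F_tendsto_zero (j : ℕ) (hj : 1 ≤ j) :
    Tendsto (fun x : ℝ =>
      (1 - Real.exp (-x) * ∑ l ∈ Finset.range j, x ^ l / l.factorial))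
      (nhdsWithin 0 (Set.Ioi 0)) (nhds 0) := by
  have hp : Tendsto (fun x : ℝ => x ^ j) (nhdsWithin 0 (Set.Ioi 0)) (nhds 0) := by
    have : Tendsto (fun x : ℝ => x ^ j) (nhds 0) (nhds ((0:ℝ) ^ j)) :=
      (continuous_pow j).tendsto 0
    rw [zero_pow (by omega)] at this
    exact this.mono_left nhdsWithin_le_nhds
  have h2 := (F_ratio j).mul hp
  rw [mul_zero] at h2
  apply h2.congr'
  filter_upwards [self_mem_nhdsWithin] with x (hx : 0 < x)
  field_simp

lemma telescope (a : ℕ → ℝ) (m : ℕ) :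
    1 - ∏ i ∈ Finset.range m, (1 - a i)
      = ∑ i ∈ Finset.range m, a i * ∏ l ∈ Finset.range i, (1 - a l) := by
  induction m with
  | zero => simp
  | succ m ih =>
    rw [Finset.prod_range_succ, Finset.sum_range_succ, ← ih]; ring

lemma G_ratio (k m : ℕ) (hk : 1 ≤ k) (hm : 1 ≤ m) :
    Tendsto (fun x : ℝ =>
      (1 - ∏ i ∈ Finset.range m,
        (1 - (1 - Real.exp (-x) * ∑ l ∈ Finset.range (k + i), x ^ l / l.factorial))) / x ^ k)
      (nhdsWithin 0 (Set.Ioi 0)) (nhds (1 / (k.factorial : ℝ))) := by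
  set Fk : ℕ → ℝ → ℝ := fun j x => 1 - Real.exp (-x) * ∑ l ∈ Finset.range j, x ^ l / l.factorial
    with hFk
  have hsum : ∀ x : ℝ, (1 - ∏ i ∈ Finset.range m, (1 - Fk (k + i) x)) / x ^ k
      = ∑ i ∈ Finset.range m, (Fk (k + i) x * ∏ l ∈ Finset.range i, (1 - Fk (k + l) x)) / x ^ k := by
    intro x
    rw [telescope (fun i => Fk (k + i) x) m, Finset.sum_div]
  have hterm : ∀ i : ℕ, Tendsto
      (fun x : ℝ => (Fk (k + i) x * ∏ l ∈ Finset.range i, (1 - Fk (k + l) x)) / x ^ k)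
      (nhdsWithin 0 (Set.Ioi 0)) (nhds ((1 / ((k + i).factorial : ℝ)) * (0:ℝ) ^ i * 1)) := by
    intro i
    have h1 : Tendsto (fun x : ℝ => Fk (k + i) x / x ^ (k + i))
        (nhdsWithin 0 (Set.Ioi 0)) (nhds (1 / ((k + i).factorial : ℝ))) := F_ratio (k + i)
    have h2 : Tendsto (fun x : ℝ => x ^ i) (nhdsWithin 0 (Set.Ioi 0)) (nhds ((0:ℝ) ^ i)) :=
      ((continuous_pow i).tendsto 0).mono_left nhdsWithin_le_nhds
    have h3 : Tendsto (fun x : ℝ => ∏ l ∈ Finset.range i, (1 - Fk (k + l) x))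
        (nhdsWithin 0 (Set.Ioi 0)) (nhds 1) := by
      have := tendsto_finset_prod (Finset.range i)
        (f := fun l (x : ℝ) => 1 - Fk (k + l) x) (x := nhdsWithin 0 (Set.Ioi 0))
        (a := fun _ => (1:ℝ)) ?_
      · simpa using this
      · intro l _
        have h := (F_tendsto_zero (k + l) (by omega)).const_sub 1
        rw [sub_zero] at h
        exact h
    have := (h1.mul h2).mul h3
    apply this.congr'
    filter_upwards [self_mem_nhdsWithin] with x (hx : 0 < x)
    have hx0 : x ≠ 0 := ne_of_gt hx
    field_simp [pow_add]
    ring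
  have hS := tendsto_finset_sum (Finset.range m)
    (f := fun i (x : ℝ) => (Fk (k + i) x * ∏ l ∈ Finset.range i, (1 - Fk (k + l) x)) / x ^ k)
    (x := nhdsWithin 0 (Set.Ioi 0)) (fun i _ => hterm i)
  have hval : ∑ i ∈ Finset.range m, (1 / ((k + i).factorial : ℝ)) * (0:ℝ) ^ i * 1
      = 1 / (k.factorial : ℝ) := by
    rw [Finset.sum_eq_single_of_mem 0 (Finset.mem_range.mpr hm)]
    · simp
    · intro i _ hi
      simp [zero_pow hi]
  rw [hval] at hS
  exact hS.congr (fun x => (hsum x).symm)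

/-- The diversity gain of coded V-BLAST with uniform (fixed average) power allocation
and fixed per-stream rate equals `n − m + 1`, the same as the unoptimized system. -/
theorem coded_vblast_fixed_rate_diversity
    (n m : ℕ) (hm : 1 ≤ m) (hmn : m ≤ n) (c : ℝ) (hc : 0 < c)
    (F : ℕ → ℝ → ℝ)
    (hF : ∀ k x, F k x = 1 - Real.exp (-x) * ∑ l ∈ Finset.range k, x ^ l / l.factorial)
    (Pout : ℝ → ℝ)
    (hPout : ∀ γ₀, Pout γ₀ = 1 - ∏ i ∈ Finset.range m, (1 - F (n - m + (i + 1)) (c / γ₀))) :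
    Tendsto (fun γ₀ : ℝ => -Real.log (Pout γ₀) / Real.log γ₀)
      atTop (nhds ((n : ℝ) - m + 1)) := by
  set k := n - m + 1 with hk
  have hkc : ((k : ℝ)) = (n : ℝ) - m + 1 := by
    rw [hk]; push_cast [Nat.cast_sub hmn]; ring
  have hG := G_ratio k m (by omega) hm
  have hx : Tendsto (fun γ₀ : ℝ => c / γ₀) atTop (nhdsWithin 0 (Set.Ioi 0)) := by
    rw [tendsto_nhdsWithin_iff]
    constructor
    · exact tendsto_const_nhds.div_atTop tendsto_id
    · filter_upwards [eventually_gt_atTop 0] with γ₀ hγ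
      exact div_pos hc hγ
  have h1 : Tendsto (fun γ₀ : ℝ => Pout γ₀ / (c / γ₀) ^ k) atTop
      (nhds (1 / (k.factorial : ℝ))) := by
    apply (hG.comp hx).congr
    intro γ₀
    simp only [Function.comp_apply, hPout]
    congr 2
    apply Finset.prod_congr rfl
    intro i _
    have hidx : n - m + (i + 1) = k + i := by omega
    rw [hF, hidx]
  have h2 : Tendsto (fun γ₀ : ℝ => Pout γ₀ * γ₀ ^ k) atTop
      (nhds (c ^ k / (k.factorial : ℝ))) := by
    have := h1.mul_const (c ^ k)
    rw [div_mul_eq_mul_div, one_mul] at this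
    apply this.congr'
    filter_upwards [eventually_gt_atTop 0] with γ₀ hγ
    have hγ' : γ₀ ≠ 0 := ne_of_gt hγ
    have hc' : c ≠ 0 := ne_of_gt hc
    field_simp
    rw [div_pow, mul_assoc, div_mul_cancel₀ _ (pow_ne_zero k hγ')]
  have hL : (0:ℝ) < c ^ k / (k.factorial : ℝ) := by positivity
  have h3 : Tendsto (fun γ₀ : ℝ => Real.log (Pout γ₀ * γ₀ ^ k)) atTop
      (nhds (Real.log (c ^ k / (k.factorial : ℝ)))) := h2.log (ne_of_gt hL)
  have hinv : Tendsto (fun γ₀ : ℝ => (Real.log γ₀)⁻¹) atTop (nhds 0) :=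
    Real.tendsto_log_atTop.inv_tendsto_atTop
  have hev : ∀ᶠ γ₀ : ℝ in atTop, 0 < Pout γ₀ := by
    filter_upwards [h2.eventually (eventually_gt_nhds hL), eventually_gt_atTop 0] with γ₀ h hγ
    have hp : (0:ℝ) < γ₀ ^ k := by positivity
    nlinarith
  have hfin : Tendsto (fun γ₀ : ℝ => (k : ℝ) - Real.log (Pout γ₀ * γ₀ ^ k) * (Real.log γ₀)⁻¹)
      atTop (nhds ((k : ℝ) - Real.log (c ^ k / (k.factorial : ℝ)) * 0)) :=
    tendsto_const_nhds.sub (h3.mul hinv)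
  rw [mul_zero, sub_zero, hkc] at hfin
  apply hfin.congr'
  filter_upwards [hev, eventually_gt_atTop 1] with γ₀ hP hγ
  have hγ0 : (0:ℝ) < γ₀ := by linarith
  have hlog : Real.log γ₀ ≠ 0 := ne_of_gt (Real.log_pos hγ)
  rw [← hkc, Real.log_mul (ne_of_gt hP) (by positivity), Real.log_pow]
  field_simp
  ring
end

section
/- Fix integers n ≥ m ≥ 1 and R > 0. Let g₁, …, g_m be independent random variables on a probability space with g_i distributed as Gamma with shape n − m + i and rate 1, and for γ₀ > 0 set C_i(γ₀) = ln(1 + γ₀ g_i) and P_out^{ORA}(γ₀) = Pr{ Σ_{i=1}^m C_i(γ₀) < mR }. Then lim_{γ₀ → ∞} ( − ln P_out^{ORA}(γ₀) / ln γ₀ ) = Σ_{i=1}^m (n − m + i) = m(n − (m−1)/2); i.e., the diversity gain of the instantaneous optimum rate allocation is m(n − (m−1)/2), which strictly exceeds the unoptimized diversity n − m + 1 when m ≥ 2. -/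
open MeasureTheory ProbabilityTheory Filter

section OraAuxSec
open Set


namespace OraAux

lemma gammaPDFReal_nat (k : ℕ) (hk : 1 ≤ k) {x : ℝ} (hx : 0 ≤ x) :
    gammaPDFReal k 1 x = x ^ (k - 1) * Real.exp (-x) / (Nat.factorial (k - 1)) := by
  have hcast : ((k : ℝ)) = ((k - 1 : ℕ) : ℝ) + 1 := by
    push_cast [Nat.cast_sub hk]; ring
  rw [gammaPDFReal, if_pos hx]
  rw [hcast, Real.Gamma_nat_eq_factorial]
  have h2 : ((k - 1 : ℕ) : ℝ) + 1 - 1 = ((k - 1 : ℕ) : ℝ) := by ring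
  rw [h2, Real.rpow_natCast, Real.one_rpow]
  ring_nf

end OraAux

namespace OraAux

lemma lint_pow (k : ℕ) (hk : 1 ≤ k) {c t : ℝ} (hc : 0 ≤ c) (ht : 0 ≤ t) :
    ∫⁻ x in Ico (0:ℝ) t, ENNReal.ofReal (c * x ^ (k - 1)) =
      ENNReal.ofReal (c * (t ^ k / k)) := by
  have hint : IntegrableOn (fun x : ℝ => c * x ^ (k - 1)) (Ico 0 t) := by
    apply (Continuous.integrableOn_Icc (by continuity)).mono_set Ico_subset_Icc_self
  rw [← MeasureTheory.ofReal_integral_eq_lintegral_ofReal hint]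
  · congr 1
    rw [MeasureTheory.integral_Ico_eq_integral_Ioo, ← MeasureTheory.integral_Ioc_eq_integral_Ioo, ← intervalIntegral.integral_of_le ht]
    rw [intervalIntegral.integral_const_mul, integral_pow]
    have : k - 1 + 1 = k := Nat.succ_pred_eq_of_pos hk
    rw [this]
    rw [zero_pow (by omega), sub_zero]
    have h3 : ((k - 1 : ℕ) : ℝ) + 1 = (k : ℝ) := by push_cast [Nat.cast_sub hk]; ring
    rw [h3]
  · filter_upwards [self_mem_ae_restrict measurableSet_Ico] with x hx
    exact mul_nonneg hc (pow_nonneg hx.1 _)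

end OraAux

namespace OraAux

lemma gamma_Iio_zero (k : ℕ) : gammaMeasure k 1 (Iio (0:ℝ)) = 0 := by
  rw [gammaMeasure, withDensity_apply _ measurableSet_Iio]
  exact lintegral_gammaPDF_of_nonpos le_rfl

lemma gamma_Iio (k : ℕ) {t : ℝ} (ht : 0 ≤ t) :
    gammaMeasure k 1 (Iio t) = ∫⁻ x in Ico (0:ℝ) t, gammaPDF k 1 x := by
  rw [gammaMeasure, withDensity_apply _ measurableSet_Iio, ← Iio_union_Ico_eq_Iio ht,
    lintegral_union measurableSet_Ico
      (by rw [Set.disjoint_left]; rintro x hx ⟨h0, _⟩; exact absurd h0 (not_le.mpr hx)),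
    lintegral_gammaPDF_of_nonpos le_rfl, zero_add]

lemma gamma_Iio_le (k : ℕ) (hk : 1 ≤ k) {t : ℝ} (ht : 0 ≤ t) :
    gammaMeasure k 1 (Iio t) ≤ ENNReal.ofReal (t ^ k) := by
  rw [gamma_Iio k ht]
  calc ∫⁻ x in Ico (0:ℝ) t, gammaPDF k 1 x
      ≤ ∫⁻ x in Ico (0:ℝ) t, ENNReal.ofReal (1 * x ^ (k - 1)) := by
        refine setLIntegral_mono (by measurability) fun x hx => ?_
        rw [gammaPDF, gammaPDFReal_nat k hk hx.1]
        refine ENNReal.ofReal_le_ofReal ?_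
        have h1 : Real.exp (-x) ≤ 1 := Real.exp_le_one_iff.mpr (by linarith [hx.1])
        have h2 : (1:ℝ) ≤ (Nat.factorial (k-1) : ℝ) := by
          exact_mod_cast Nat.one_le_iff_ne_zero.mpr (Nat.factorial_pos _).ne'
        have h3 : (0:ℝ) ≤ x ^ (k-1) := pow_nonneg hx.1 _
        rw [one_mul]
        calc x ^ (k-1) * Real.exp (-x) / (Nat.factorial (k-1) : ℝ)
            ≤ x ^ (k-1) * Real.exp (-x) / 1 := by
              apply div_le_div_of_nonneg_left (by positivity) one_pos h2
            _ ≤ x ^ (k-1) := by rw [div_one]; nlinarith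
    _ = ENNReal.ofReal (1 * (t ^ k / k)) := lint_pow k hk zero_le_one ht
    _ ≤ ENNReal.ofReal (t ^ k) := by
        refine ENNReal.ofReal_le_ofReal ?_
        rw [one_mul]
        apply div_le_self (pow_nonneg ht _) (by exact_mod_cast hk)

lemma gamma_Ico_ge (k : ℕ) (hk : 1 ≤ k) {t : ℝ} (ht : 0 ≤ t) (ht1 : t ≤ 1) :
    ENNReal.ofReal (Real.exp (-1) / (Nat.factorial k) * t ^ k) ≤
      gammaMeasure k 1 (Ico (0:ℝ) t) := by
  rw [gammaMeasure, withDensity_apply _ measurableSet_Ico]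
  have hc : (0:ℝ) ≤ Real.exp (-1) / (Nat.factorial (k-1)) := by positivity
  calc ENNReal.ofReal (Real.exp (-1) / (Nat.factorial k) * t ^ k)
      = ENNReal.ofReal (Real.exp (-1) / (Nat.factorial (k-1)) * (t ^ k / k)) := by
        congr 1
        have hfac : ((Nat.factorial k : ℝ)) = (k : ℝ) * (Nat.factorial (k-1) : ℝ) := by
          exact_mod_cast (Nat.mul_factorial_pred (by omega)).symm
        have hk0 : (0:ℝ) < (k:ℝ) := by exact_mod_cast hk
        have hf0 : (0:ℝ) < (Nat.factorial (k-1) : ℝ) := by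
          exact_mod_cast Nat.factorial_pos _
        field_simp [hfac]
        rw [hfac]; ring
    _ = ∫⁻ x in Ico (0:ℝ) t, ENNReal.ofReal
          (Real.exp (-1) / (Nat.factorial (k-1)) * x ^ (k - 1)) := (lint_pow k hk hc ht).symm
    _ ≤ ∫⁻ x in Ico (0:ℝ) t, gammaPDF k 1 x := by
        refine setLIntegral_mono (ENNReal.measurable_ofReal.comp (measurable_gammaPDFReal _ _)) fun x hx => ?_
        rw [gammaPDF, gammaPDFReal_nat k hk hx.1]
        refine ENNReal.ofReal_le_ofReal ?_
        have hex : Real.exp (-1) ≤ Real.exp (-x) :=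
          Real.exp_le_exp.mpr (by linarith [hx.2, ht1])
        have h3 : (0:ℝ) ≤ x ^ (k-1) := pow_nonneg hx.1 _
        have hf0 : (0:ℝ) < (Nat.factorial (k-1) : ℝ) := by exact_mod_cast Nat.factorial_pos _
        rw [div_mul_eq_mul_div, div_le_div_iff₀ hf0 hf0]
        nlinarith [mul_nonneg (mul_nonneg (sub_nonneg.mpr hex) h3) hf0.le]

end OraAux


namespace OraAux

lemma sum_fin_cast (m : ℕ) (hm : 1 ≤ m) :
    ∑ i : Fin m, ((i : ℕ) : ℝ) = (m : ℝ) * ((m : ℝ) - 1) / 2 := by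
  rw [Fin.sum_univ_eq_sum_range (fun i => ((i : ℕ) : ℝ)) m]
  have h4 := congrArg (Nat.cast : ℕ → ℝ) (Finset.sum_range_id_mul_two m)
  push_cast [Nat.cast_sub hm] at h4
  linarith

end OraAux
end OraAuxSec

/-- Diversity gain of the instantaneous optimum rate allocation (ORA) in coded
V-BLAST: with independent Gamma-distributed effective gains `gᵢ` of shapes `n−m+i`,
the outage probability `Pr{Σᵢ ln(1+γ₀ gᵢ) < mR}` has diversity gain
`Σᵢ (n−m+i) = m(n−(m−1)/2)`, strictly larger than the unoptimized `n−m+1` when `m ≥ 2`. -/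
theorem ora_diversity_gain
    {Ω : Type*} [MeasurableSpace Ω] (μ : Measure Ω) [IsProbabilityMeasure μ]
    (n m : ℕ) (hm : 1 ≤ m) (hmn : m ≤ n) (R : ℝ) (hR : 0 < R)
    (g : Fin m → Ω → ℝ) (hg : ∀ i, Measurable (g i))
    (hind : iIndepFun g μ)
    (hlaw : ∀ i : Fin m, Measure.map (g i) μ = gammaMeasure (n - m + (i : ℕ) + 1) 1) :
    Tendsto
      (fun γ₀ : ℝ =>
        -Real.log ((μ {ω | ∑ i, Real.log (1 + γ₀ * g i ω) < m * R}).toReal) /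
          Real.log γ₀)
      atTop (nhds ((m : ℝ) * ((n : ℝ) - ((m : ℝ) - 1) / 2))) ∧
    (2 ≤ m → (n : ℝ) - m + 1 < (m : ℝ) * ((n : ℝ) - ((m : ℝ) - 1) / 2)) := by
  have hmn' : (m : ℝ) ≤ (n : ℝ) := by exact_mod_cast hmn
  have hm' : (1 : ℝ) ≤ (m : ℝ) := by exact_mod_cast hm
  constructor
  · -- main limit
    set k : Fin m → ℕ := fun i => n - m + (i : ℕ) + 1 with hk_def
    have hk1 : ∀ i, 1 ≤ k i := fun i => Nat.le_add_left 1 _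
    set D : ℕ := ∑ i : Fin m, k i with hD_def
    have hD1 : 1 ≤ D := by
      have : Nonempty (Fin m) := ⟨⟨0, hm⟩⟩
      calc 1 ≤ k (Classical.arbitrary (Fin m)) := hk1 _
        _ ≤ D := Finset.single_le_sum (f := k) (fun i _ => Nat.zero_le _) (Finset.mem_univ _)
    have hlaw' : ∀ i, Measure.map (g i) μ = gammaMeasure (k i) 1 := by
      intro i
      rw [hlaw i]
      congr 1
      simp only [hk_def]
      push_cast [Nat.cast_sub hmn]
      ring
    have hpre : ∀ (i : Fin m) (s : Set ℝ), MeasurableSet s →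
        μ (g i ⁻¹' s) = gammaMeasure (k i) 1 s := by
      intro i s hs
      rw [← Measure.map_apply (hg i) hs, hlaw' i]
    -- constants
    set A : ℝ := Real.exp (m * R) - 1 with hA_def
    have hA : 0 < A := by
      have h1 : (0:ℝ) < m * R := by positivity
      have := Real.exp_lt_exp.mpr h1
      simp only [Real.exp_zero] at this
      simp [hA_def]; linarith
    set B : ℝ := Real.exp R - 1 with hB_def
    have hB : 0 < B := by
      have := Real.exp_lt_exp.mpr hR
      simp only [Real.exp_zero] at this
      simp [hB_def]; linarith
    set c : ℝ := ∏ i : Fin m, (Real.exp (-1) / (Nat.factorial (k i))) with hc_def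
    have hc : 0 < c := Finset.prod_pos fun i _ => by positivity
    set S : ℝ → Set Ω := fun γ => {ω | ∑ i, Real.log (1 + γ * g i ω) < m * R} with hS_def
    -- upper bound
    have hupper : ∀ γ : ℝ, 0 < γ → μ (S γ) ≤ ENNReal.ofReal ((A / γ) ^ D) := by
      intro γ hγ
      have hsub : S γ ⊆ (⋂ i, g i ⁻¹' Set.Iio (A / γ)) ∪ (⋃ i, g i ⁻¹' Set.Iio 0) := by
        intro ω hω
        by_cases hcase : ∃ i, g i ω < 0
        · exact Or.inr (Set.mem_iUnion.mpr ⟨hcase.choose, hcase.choose_spec⟩)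
        · push_neg at hcase
          refine Or.inl (Set.mem_iInter.mpr fun i => ?_)
          have hterm : ∀ j, 0 ≤ Real.log (1 + γ * g j ω) := fun j =>
            Real.log_nonneg (by nlinarith [hcase j])
          have hle : Real.log (1 + γ * g i ω) ≤ ∑ j, Real.log (1 + γ * g j ω) :=
            Finset.single_le_sum (fun j _ => hterm j) (Finset.mem_univ i)
          have hlt : Real.log (1 + γ * g i ω) < m * R := lt_of_le_of_lt hle hω
          have hx : (0:ℝ) < 1 + γ * g i ω := by nlinarith [hcase i]
          have hexp : 1 + γ * g i ω < Real.exp (m * R) := (Real.log_lt_iff_lt_exp hx).mp hlt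
          have : g i ω < A / γ := by
            rw [lt_div_iff₀ hγ]
            have := mul_comm γ (g i ω)
            simp only [hA_def]
            linarith
          exact this
      have hnull : μ (⋃ i, g i ⁻¹' Set.Iio 0) = 0 :=
        measure_iUnion_null fun i => by
          rw [hpre i _ measurableSet_Iio]; exact OraAux.gamma_Iio_zero _
      have h1 : μ (S γ) ≤ μ (⋂ i, g i ⁻¹' Set.Iio (A / γ)) := by
        calc μ (S γ) ≤ μ ((⋂ i, g i ⁻¹' Set.Iio (A / γ)) ∪ (⋃ i, g i ⁻¹' Set.Iio 0)) :=
              measure_mono hsub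
          _ ≤ μ (⋂ i, g i ⁻¹' Set.Iio (A / γ)) + μ (⋃ i, g i ⁻¹' Set.Iio 0) :=
              measure_union_le _ _
          _ = μ (⋂ i, g i ⁻¹' Set.Iio (A / γ)) := by rw [hnull, add_zero]
      rw [hind.meas_iInter (fun i => ⟨Set.Iio (A / γ), measurableSet_Iio, rfl⟩)] at h1
      have h2 : ∏ i, μ (g i ⁻¹' Set.Iio (A / γ)) ≤ ∏ i : Fin m, ENNReal.ofReal ((A/γ) ^ k i) :=
        Finset.prod_le_prod' fun i _ => by
          rw [hpre i _ measurableSet_Iio]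
          exact OraAux.gamma_Iio_le (k i) (hk1 i) (div_nonneg hA.le hγ.le)
      calc μ (S γ) ≤ ∏ i : Fin m, ENNReal.ofReal ((A/γ) ^ k i) := h1.trans h2
        _ = ENNReal.ofReal (∏ i : Fin m, (A/γ) ^ k i) :=
            (ENNReal.ofReal_prod_of_nonneg fun i _ => pow_nonneg (div_nonneg hA.le hγ.le) _).symm
        _ = ENNReal.ofReal ((A/γ) ^ D) := by rw [Finset.prod_pow_eq_pow_sum]
    -- lower bound
    have hlower : ∀ γ : ℝ, max B 1 ≤ γ →
        ENNReal.ofReal (c * (B / γ) ^ D) ≤ μ (S γ) := by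
      intro γ hγ
      have hγ0 : 0 < γ := lt_of_lt_of_le (by simp [zero_lt_one]) hγ
      have htB : 0 ≤ B / γ := div_nonneg hB.le hγ0.le
      have ht1 : B / γ ≤ 1 := by
        rw [div_le_one hγ0]; exact le_trans (le_max_left _ _) hγ
      have hsub : (⋂ i, g i ⁻¹' Set.Ico 0 (B / γ)) ⊆ S γ := by
        intro ω hω
        simp only [Set.mem_iInter, Set.mem_preimage, Set.mem_Ico] at hω
        have hterm : ∀ i : Fin m, Real.log (1 + γ * g i ω) < R := by
          intro i
          have h0 : 0 ≤ g i ω := (hω i).1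
          have h1 : g i ω * γ < B := (lt_div_iff₀ hγ0).mp (hω i).2
          have hx : (0:ℝ) < 1 + γ * g i ω := by nlinarith
          have : 1 + γ * g i ω < Real.exp R := by
            have := mul_comm γ (g i ω)
            simp only [hB_def] at h1
            linarith
          exact (Real.log_lt_iff_lt_exp hx).mpr this
        have hne : (Finset.univ : Finset (Fin m)).Nonempty := by
          have : Nonempty (Fin m) := ⟨⟨0, hm⟩⟩
          exact Finset.univ_nonempty
        have := Finset.sum_lt_sum_of_nonempty hne (fun i _ => hterm i)
        simp only [hS_def, Set.mem_setOf_eq]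
        calc ∑ i, Real.log (1 + γ * g i ω) < ∑ _i : Fin m, R := this
          _ = m * R := by
            rw [Finset.sum_const, Finset.card_univ, Fintype.card_fin, nsmul_eq_mul]
      have h1 : μ (⋂ i, g i ⁻¹' Set.Ico 0 (B / γ)) ≤ μ (S γ) := measure_mono hsub
      rw [hind.meas_iInter (fun i => ⟨Set.Ico 0 (B / γ), measurableSet_Ico, rfl⟩)] at h1
      refine le_trans ?_ h1
      have h2 : ∀ i : Fin m, ENNReal.ofReal (Real.exp (-1) / (Nat.factorial (k i)) * (B/γ) ^ k i)
          ≤ μ (g i ⁻¹' Set.Ico 0 (B / γ)) := fun i => by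
        rw [hpre i _ measurableSet_Ico]
        exact OraAux.gamma_Ico_ge (k i) (hk1 i) htB ht1
      calc ENNReal.ofReal (c * (B / γ) ^ D)
          = ENNReal.ofReal (∏ i : Fin m, (Real.exp (-1) / (Nat.factorial (k i)) * (B/γ) ^ k i)) := by
            rw [Finset.prod_mul_distrib, Finset.prod_pow_eq_pow_sum]
        _ = ∏ i : Fin m, ENNReal.ofReal (Real.exp (-1) / (Nat.factorial (k i)) * (B/γ) ^ k i) :=
            ENNReal.ofReal_prod_of_nonneg fun i _ => by positivity
        _ ≤ ∏ i, μ (g i ⁻¹' Set.Ico 0 (B / γ)) := Finset.prod_le_prod' fun i _ => h2 i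
    -- real-valued bounds
    set P : ℝ → ℝ := fun γ => (μ (S γ)).toReal with hP_def
    have hPub : ∀ γ : ℝ, 0 < γ → P γ ≤ (A / γ) ^ D := fun γ hγ =>
      ENNReal.toReal_le_of_le_ofReal (pow_nonneg (div_nonneg hA.le hγ.le) _) (hupper γ hγ)
    have hPlb : ∀ γ : ℝ, max B 1 ≤ γ → c * (B / γ) ^ D ≤ P γ := by
      intro γ hγ
      have hγ0 : (0:ℝ) < γ := lt_of_lt_of_le (lt_of_lt_of_le one_pos (le_max_right B 1)) hγ
      have := ENNReal.toReal_mono (measure_ne_top μ _) (hlower γ hγ)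
      rwa [ENNReal.toReal_ofReal
        (mul_nonneg hc.le (pow_nonneg (div_nonneg hB.le hγ0.le) _))] at this
    -- squeeze
    set d : ℝ := (D : ℝ) with hd_def
    have hkey : ∀ γ : ℝ, max (max B 1) 2 ≤ γ →
        (d - d * Real.log A / Real.log γ ≤ -Real.log (P γ) / Real.log γ ∧
         -Real.log (P γ) / Real.log γ ≤ d + (-(Real.log c) - d * Real.log B) / Real.log γ) := by
      intro γ hγ
      have hγ2 : (2:ℝ) ≤ γ := le_trans (le_max_right _ _) hγ
      have hγB : max B 1 ≤ γ := le_trans (le_max_left _ _) hγ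
      have hγ0 : (0:ℝ) < γ := by linarith
      have hlog : 0 < Real.log γ := Real.log_pos (by linarith)
      have htpos : 0 < B / γ := div_pos hB hγ0
      have hP0 : 0 < P γ := lt_of_lt_of_le (mul_pos hc (pow_pos htpos _)) (hPlb γ hγB)
      have hup : Real.log (P γ) ≤ d * (Real.log A - Real.log γ) := by
        have h1 : Real.log (P γ) ≤ Real.log ((A / γ) ^ D) :=
          Real.log_le_log hP0 (hPub γ hγ0)
        rwa [Real.log_pow, Real.log_div hA.ne' hγ0.ne'] at h1
      have hlo : Real.log c + d * (Real.log B - Real.log γ) ≤ Real.log (P γ) := by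
        have h1 : Real.log (c * (B / γ) ^ D) ≤ Real.log (P γ) :=
          Real.log_le_log (by positivity) (hPlb γ hγB)
        rwa [Real.log_mul hc.ne' (by positivity), Real.log_pow,
          Real.log_div hB.ne' hγ0.ne'] at h1
      constructor
      · have heq : d - d * Real.log A / Real.log γ
            = -(d * (Real.log A - Real.log γ)) / Real.log γ := by
          field_simp
          ring
        rw [heq]
        gcongr
      · have heq : d + (-(Real.log c) - d * Real.log B) / Real.log γ
            = -(Real.log c + d * (Real.log B - Real.log γ)) / Real.log γ := by
          field_simp
          ring
        rw [heq]
        gcongr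
    have h0 : Tendsto (fun γ : ℝ => (Real.log γ)⁻¹) atTop (nhds 0) :=
      tendsto_inv_atTop_zero.comp Real.tendsto_log_atTop
    have hL : Tendsto (fun γ : ℝ => d - d * Real.log A / Real.log γ) atTop (nhds d) := by
      have h1 : Tendsto (fun γ : ℝ => d * Real.log A / Real.log γ) atTop (nhds 0) := by
        simpa [div_eq_mul_inv] using h0.const_mul (d * Real.log A)
      simpa using tendsto_const_nhds.sub h1
    have hU : Tendsto (fun γ : ℝ => d + (-(Real.log c) - d * Real.log B) / Real.log γ)
        atTop (nhds d) := by
      have h1 : Tendsto (fun γ : ℝ => (-(Real.log c) - d * Real.log B) / Real.log γ)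
          atTop (nhds 0) := by
        simpa [div_eq_mul_inv] using h0.const_mul (-(Real.log c) - d * Real.log B)
      simpa using tendsto_const_nhds.add h1
    have hfinal : Tendsto (fun γ : ℝ => -Real.log (P γ) / Real.log γ) atTop (nhds d) := by
      refine tendsto_of_tendsto_of_tendsto_of_le_of_le' hL hU ?_ ?_
      · filter_upwards [eventually_ge_atTop (max (max B 1) 2)] with γ hγ
        exact (hkey γ hγ).1
      · filter_upwards [eventually_ge_atTop (max (max B 1) 2)] with γ hγ
        exact (hkey γ hγ).2
    have hd : d = (m : ℝ) * ((n : ℝ) - ((m : ℝ) - 1) / 2) := by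
      have h1 : d = ∑ i : Fin m, ((n : ℝ) - (m : ℝ) + ((i : ℕ) : ℝ) + 1) := by
        simp only [hd_def, hD_def, hk_def, Nat.cast_sum]
        refine Finset.sum_congr rfl fun i _ => ?_
        push_cast [Nat.cast_sub hmn]
        ring
      rw [h1]
      rw [Finset.sum_add_distrib, Finset.sum_add_distrib, OraAux.sum_fin_cast m hm,
        Finset.sum_const, Finset.sum_const, Finset.card_univ, Fintype.card_fin,
        nsmul_eq_mul, nsmul_eq_mul]
      ring
    rw [← hd]
    exact hfinal
  · intro h2
    have h2' : (2:ℝ) ≤ (m : ℝ) := by exact_mod_cast h2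
    nlinarith
end

section
/- Let m ≥ 1, let g₁, …, g_m > 0 be channel gains, γ₀ > 0 the SNR and P > 0 the total power. Suppose λ > 0 and the allocation α*_i = max(1/λ − 1/(γ₀ g_i), 0) satisfies Σ_{i=1}^m α*_i = P. Then α* maximizes the sum capacity: for every α ∈ ℝ^m with α_i ≥ 0 and Σ_{i=1}^m α_i = P, one has Σ_{i=1}^m ln(1 + α_i γ₀ g_i) ≤ Σ_{i=1}^m ln(1 + α*_i γ₀ g_i). -/
/-- Optimality of the waterfilling power allocation: if `α*ᵢ = (1/λ − 1/(γ₀ gᵢ))₊`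
meets the total power constraint `Σ α*ᵢ = P`, then it maximizes the sum capacity
`Σ ln(1 + αᵢ γ₀ gᵢ)` over all nonnegative allocations with total power `P`. -/
theorem waterfilling_maximizes_sum_capacity
    (m : ℕ) (hm : 1 ≤ m) (g : Fin m → ℝ) (hg : ∀ i, 0 < g i)
    (γ₀ P lam : ℝ) (hγ₀ : 0 < γ₀) (hP : 0 < P) (hlam : 0 < lam)
    (αstar : Fin m → ℝ)
    (hαstar : ∀ i, αstar i = max (1 / lam - 1 / (γ₀ * g i)) 0)
    (hsum : ∑ i, αstar i = P) :
    ∀ α : Fin m → ℝ, (∀ i, 0 ≤ α i) → ∑ i, α i = P →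
      ∑ i, Real.log (1 + α i * γ₀ * g i) ≤ ∑ i, Real.log (1 + αstar i * γ₀ * g i) := by
  intro α hα hαsum
  have key : ∀ i, Real.log (1 + α i * γ₀ * g i) ≤
      Real.log (1 + αstar i * γ₀ * g i) + lam * (α i - αstar i) := by
    intro i
    have hγg : 0 < γ₀ * g i := mul_pos hγ₀ (hg i)
    have hstar_nonneg : 0 ≤ αstar i := by rw [hαstar i]; exact le_max_right _ _
    have ha : 0 < 1 + αstar i * γ₀ * g i := by nlinarith
    have hb : 0 < 1 + α i * γ₀ * g i := by nlinarith [hα i]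
    have hlog : Real.log (1 + α i * γ₀ * g i) - Real.log (1 + αstar i * γ₀ * g i) ≤
        ((α i - αstar i) * (γ₀ * g i)) / (1 + αstar i * γ₀ * g i) := by
      have h1 := Real.log_le_sub_one_of_pos (div_pos hb ha)
      rw [Real.log_div hb.ne' ha.ne'] at h1
      have h2 : (1 + α i * γ₀ * g i) / (1 + αstar i * γ₀ * g i) - 1 =
          ((α i - αstar i) * (γ₀ * g i)) / (1 + αstar i * γ₀ * g i) := by
        field_simp; ring
      linarith [h2 ▸ h1]
    rcases le_or_gt (1 / lam - 1 / (γ₀ * g i)) 0 with hcase | hcase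
    · have hst0 : αstar i = 0 := by rw [hαstar i, max_eq_right hcase]
      have hgle : γ₀ * g i ≤ lam := by
        have h3 : γ₀ * g i - lam = (γ₀ * g i) * lam * (1 / lam - 1 / (γ₀ * g i)) := by
          field_simp [(hg i).ne']
        have h4 : (γ₀ * g i) * lam * (1 / lam - 1 / (γ₀ * g i)) ≤ 0 :=
          mul_nonpos_of_nonneg_of_nonpos (mul_pos hγg hlam).le hcase
        linarith
      rw [hst0] at hlog ⊢
      have hbound : (α i - 0) * (γ₀ * g i) / (1 + 0 * γ₀ * g i) ≤ lam * (α i - 0) := by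
        simp only [sub_zero, zero_mul, add_zero, div_one]
        nlinarith [hα i]
      linarith
    · have hst : αstar i = 1 / lam - 1 / (γ₀ * g i) := by
        rw [hαstar i, max_eq_left hcase.le]
      have hdenom : 1 + αstar i * γ₀ * g i = (γ₀ * g i) / lam := by
        rw [hst]; field_simp [(hg i).ne']; ring
      have heq : (α i - αstar i) * (γ₀ * g i) / (1 + αstar i * γ₀ * g i) =
          lam * (α i - αstar i) := by
        rw [hdenom]; field_simp [(hg i).ne']
      rw [heq] at hlog
      linarith
  calc ∑ i, Real.log (1 + α i * γ₀ * g i)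
      ≤ ∑ i, (Real.log (1 + αstar i * γ₀ * g i) + lam * (α i - αstar i)) :=
        Finset.sum_le_sum fun i _ => key i
    _ = ∑ i, Real.log (1 + αstar i * γ₀ * g i) + lam * (∑ i, α i - ∑ i, αstar i) := by
        rw [Finset.sum_add_distrib, ← Finset.mul_sum, Finset.sum_sub_distrib]
    _ = ∑ i, Real.log (1 + αstar i * γ₀ * g i) := by
        rw [hαsum, hsum]; ring
end

section
/- Let k > k′ ≥ 1 be integers, m > 0, and let g₁, …, g_k > 0 and g′₁, …, g′_{k′} > 0 be two sets of channel gains. For γ₀ > 0 define C(γ₀) = Σ_{i=1}^k ln(1 + α_i(γ₀) γ₀ g_i) with α_i(γ₀) = 1/λ(γ₀) − 1/(γ₀ g_i) and 1/λ(γ₀) = (1/k)(m + (1/γ₀) Σ_{i=1}^k 1/g_i), and define C′(γ₀) analogously from g′ and k′. Then lim_{γ₀ → ∞} ( C(γ₀) − C′(γ₀) ) = +∞; i.e., at high SNR the waterfilled capacity with more active streams exceeds that with fewer streams, so keeping all streams active is eventually optimal. -/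
open Filter

lemma wf_sum_log_eq (n : ℕ) (hn : 0 < n) (m : ℝ) (hm : 0 < m) (g : Fin n → ℝ)
    (hg : ∀ i, 0 < g i) (γ : ℝ) (hγ : 0 < γ) :
    ∑ i, Real.log (1 + ((1 / (n : ℝ)) * (m + (1 / γ) * ∑ j, 1 / g j) - 1 / (γ * g i)) * γ * g i)
      = (∑ i, Real.log (g i)) + n * Real.log (m * γ + ∑ j, 1 / g j) - n * Real.log n := by
  have hS : 0 < ∑ j, 1 / g j := by
    have : Nonempty (Fin n) := ⟨⟨0, hn⟩⟩
    exact Finset.sum_pos (fun j _ => by simpa using div_pos one_pos (hg j)) Finset.univ_nonempty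
  have hX : 0 < m * γ + ∑ j, 1 / g j := add_pos (mul_pos hm hγ) hS
  have hn' : (0:ℝ) < n := by exact_mod_cast hn
  have hterm : ∀ i : Fin n,
      1 + ((1 / (n : ℝ)) * (m + (1 / γ) * ∑ j, 1 / g j) - 1 / (γ * g i)) * γ * g i
        = g i * (m * γ + ∑ j, 1 / g j) / n := by
    intro i
    have hgi := (hg i).ne'
    field_simp
    ring
  calc ∑ i, Real.log (1 + ((1 / (n : ℝ)) * (m + (1 / γ) * ∑ j, 1 / g j) - 1 / (γ * g i)) * γ * g i)
      = ∑ i : Fin n, (Real.log (g i) + Real.log (m * γ + ∑ j, 1 / g j) - Real.log n) := by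
        refine Finset.sum_congr rfl fun i _ => ?_
        rw [hterm i, Real.log_div (mul_pos (hg i) hX).ne' hn'.ne',
          Real.log_mul (hg i).ne' hX.ne']
    _ = _ := by
        rw [Finset.sum_sub_distrib, Finset.sum_add_distrib, Finset.sum_const, Finset.sum_const,
          Finset.card_univ, Fintype.card_fin, nsmul_eq_mul, nsmul_eq_mul]

/-- At high SNR, the interior waterfilling capacity with more active streams exceeds
that with fewer streams: the difference tends to `+∞`, so keeping all streams active
is eventually optimal. -/
theorem more_streams_better_at_high_snr
    (k k' : ℕ) (hk' : 1 ≤ k') (hkk' : k' < k) (m : ℝ) (hm : 0 < m)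
    (g : Fin k → ℝ) (hg : ∀ i, 0 < g i)
    (g' : Fin k' → ℝ) (hg' : ∀ i, 0 < g' i)
    (C C' : ℝ → ℝ)
    (hC : ∀ γ₀, C γ₀ = ∑ i, Real.log
      (1 + ((1 / (k : ℝ)) * (m + (1 / γ₀) * ∑ j, 1 / g j) - 1 / (γ₀ * g i)) * γ₀ * g i))
    (hC' : ∀ γ₀, C' γ₀ = ∑ i, Real.log
      (1 + ((1 / (k' : ℝ)) * (m + (1 / γ₀) * ∑ j, 1 / g' j) - 1 / (γ₀ * g' i)) * γ₀ * g' i)) :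
    Tendsto (fun γ₀ => C γ₀ - C' γ₀) atTop atTop := by
  have hk : 0 < k := lt_trans (by omega) hkk'
  set S : ℝ := ∑ j, 1 / g j with hSdef
  set S' : ℝ := ∑ j, 1 / g' j with hS'def
  have hS : 0 < S := by
    have : Nonempty (Fin k) := ⟨⟨0, hk⟩⟩
    exact Finset.sum_pos (fun j _ => by simpa using div_pos one_pos (hg j)) Finset.univ_nonempty
  have hS' : 0 < S' := by
    have : Nonempty (Fin k') := ⟨⟨0, hk'⟩⟩
    exact Finset.sum_pos (fun j _ => by simpa using div_pos one_pos (hg' j)) Finset.univ_nonempty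
  set B : ℝ := ((∑ i, Real.log (g i)) - k * Real.log k)
      - ((∑ i, Real.log (g' i)) - k' * Real.log k') with hBdef
  have heq : ∀ᶠ γ in atTop, (k : ℝ) * Real.log (m * γ + S)
      - (k' : ℝ) * Real.log (m * γ + S') + B = C γ - C' γ := by
    filter_upwards [eventually_gt_atTop (0:ℝ)] with γ hγ
    rw [hC, hC', wf_sum_log_eq k hk m hm g hg γ hγ,
      wf_sum_log_eq k' hk' m hm g' hg' γ hγ, hBdef]
    ring
  refine Tendsto.congr' heq ?_
  -- lower bound by ((k : ℝ) - k') * log (m*γ+S) + (B - k' * log 2)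
  have hlow : Tendsto (fun γ : ℝ => ((k : ℝ) - k') * Real.log (m * γ + S)
      + (B - k' * Real.log 2)) atTop atTop := by
    apply tendsto_atTop_add_const_right
    apply Tendsto.const_mul_atTop (by
      have : (k' : ℝ) < k := by exact_mod_cast hkk'
      linarith)
    exact Real.tendsto_log_atTop.comp
      (tendsto_atTop_add_const_right _ S (Tendsto.const_mul_atTop hm tendsto_id))
  refine tendsto_atTop_mono' _ ?_ hlow
  filter_upwards [eventually_ge_atTop (S' / m), eventually_gt_atTop (0:ℝ)] with γ hγ hγ0
  have hX : 0 < m * γ + S := add_pos (mul_pos hm hγ0) hS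
  have hmono : Real.log (m * γ + S') ≤ Real.log 2 + Real.log (m * γ + S) := by
    rw [← Real.log_mul (by norm_num) hX.ne']
    apply Real.log_le_log (by positivity)
    have : S' ≤ m * γ := by
      rw [div_le_iff₀ hm] at hγ
      linarith
    nlinarith
  have hk'0 : (0:ℝ) ≤ k' := by positivity
  nlinarith [mul_le_mul_of_nonneg_left hmono hk'0]
end

section
/- Let m ≥ 1, R > 0, and let g₁, …, g_m be nonnegative random variables on a probability space. For γ > 0 define P_out^{ORA}(γ) = Pr{ Σ_{i=1}^m ln(1 + γ g_i) < mR } and P_out^{OPRA}(γ₀) = Pr{ sup_{α ∈ S} Σ_{i=1}^m ln(1 + α_i γ₀ g_i) < mR }, where S = { α ∈ ℝ^m : α_i ≥ 0, Σ α_i = m }. Then for every γ₀ > 0, P_out^{ORA}(m γ₀) ≤ P_out^{OPRA}(γ₀) ≤ P_out^{ORA}(γ₀); i.e., the SNR gain of the joint optimum power/rate allocation over rate-only allocation is between 1 and m. -/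
open MeasureTheory
open scoped ENNReal

/-- The SNR gain of the joint optimum power/rate allocation (OPRA) over the optimum
rate allocation (ORA) with uniform power is between 1 and `m`:
`P_out^{ORA}(m γ₀) ≤ P_out^{OPRA}(γ₀) ≤ P_out^{ORA}(γ₀)`. -/
theorem opra_snr_gain_bounds
    {Ω : Type*} [MeasurableSpace Ω] (μ : Measure Ω) [IsProbabilityMeasure μ]
    (m : ℕ) (hm : 1 ≤ m) (R : ℝ) (hR : 0 < R)
    (g : Fin m → Ω → ℝ) (hg : ∀ i, Measurable (g i)) (hnonneg : ∀ i ω, 0 ≤ g i ω)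
    (PoutORA : ℝ → ℝ≥0∞)
    (hORA : ∀ γ, PoutORA γ = μ {ω | ∑ i, Real.log (1 + γ * g i ω) < m * R})
    (PoutOPRA : ℝ → ℝ≥0∞)
    (hOPRA : ∀ γ₀, PoutOPRA γ₀ =
      μ {ω | (⨆ α : {α : Fin m → ℝ // (∀ i, 0 ≤ α i) ∧ ∑ i, α i = m},
        ∑ i, Real.log (1 + (α : Fin m → ℝ) i * γ₀ * g i ω)) < m * R}) :
    ∀ γ₀ : ℝ, 0 < γ₀ →
      PoutORA (m * γ₀) ≤ PoutOPRA γ₀ ∧ PoutOPRA γ₀ ≤ PoutORA γ₀ := by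
  intro γ₀ hγ₀
  have hne : Nonempty {α : Fin m → ℝ // (∀ i, 0 ≤ α i) ∧ ∑ i, α i = m} :=
    ⟨⟨fun _ => 1, fun _ => zero_le_one, by simp⟩⟩
  -- key pointwise bound: sup ≤ Σ log(1 + m γ₀ g i)
  have hub : ∀ ω, ∀ α : {α : Fin m → ℝ // (∀ i, 0 ≤ α i) ∧ ∑ i, α i = m},
      ∑ i, Real.log (1 + (α : Fin m → ℝ) i * γ₀ * g i ω)
        ≤ ∑ i, Real.log (1 + (m * γ₀) * g i ω) := by
    intro ω α
    apply Finset.sum_le_sum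
    intro i _
    have hαi : 0 ≤ α.1 i := α.2.1 i
    have hαm : α.1 i ≤ (m : ℝ) := by
      calc α.1 i ≤ ∑ j, α.1 j :=
            Finset.single_le_sum (fun j _ => α.2.1 j) (Finset.mem_univ i)
        _ = (m : ℝ) := α.2.2
    have hgp := hnonneg i ω
    have hp : 0 ≤ α.1 i * γ₀ * g i ω := mul_nonneg (mul_nonneg hαi hγ₀.le) hgp
    have h1 : (0:ℝ) < 1 + α.1 i * γ₀ * g i ω := by linarith
    apply Real.log_le_log h1
    have := mul_le_mul_of_nonneg_right (mul_le_mul_of_nonneg_right hαm hγ₀.le) hgp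
    linarith
  have hbdd : ∀ ω, BddAbove (Set.range fun α : {α : Fin m → ℝ //
      (∀ i, 0 ≤ α i) ∧ ∑ i, α i = m} =>
      ∑ i, Real.log (1 + (α : Fin m → ℝ) i * γ₀ * g i ω)) := by
    intro ω
    refine ⟨∑ i, Real.log (1 + (m * γ₀) * g i ω), ?_⟩
    rintro x ⟨α, rfl⟩
    exact hub ω α
  constructor
  · rw [hORA, hOPRA]
    apply measure_mono
    intro ω hω
    simp only [Set.mem_setOf_eq] at *
    exact lt_of_le_of_lt (ciSup_le (hub ω)) hω
  · rw [hORA, hOPRA]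
    apply measure_mono
    intro ω hω
    simp only [Set.mem_setOf_eq] at *
    refine lt_of_le_of_lt ?_ hω
    have := le_ciSup (hbdd ω) (⟨fun _ => 1, fun _ => zero_le_one, by simp⟩ :
      {α : Fin m → ℝ // (∀ i, 0 ≤ α i) ∧ ∑ i, α i = m})
    simpa using this
end

section
/- Fix integers n ≥ m ≥ 1, R > 0, and set c = e^R − 1. For a power allocation α with α_i > 0 and Σ_{i=1}^m α_i = m, define P(α, γ₀) = 1 − ∏_{i=1}^m (1 − F_{n−m+i}( c/(α_i γ₀) )). Then for every such α and every γ₀ > 0, P(u, m γ₀) ≤ P(α, γ₀) ≤ P(α, γ₀) and in particular P(u, m γ₀) ≤ inf_α P(α, γ₀) ≤ P(u, γ₀), where u = (1, …, 1) is the uniform allocation; i.e., the SNR gain of the optimum average power allocation (with fixed per-stream rate) is between 1 and m. -/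
open Finset

private noncomputable def gvb (k : ℕ) (x : ℝ) : ℝ :=
  Real.exp (-x) * ∑ l ∈ Finset.range (k + 1), x ^ l / l.factorial

private lemma gvb_hasDerivAt (k : ℕ) (x : ℝ) :
    HasDerivAt (gvb k) (-(Real.exp (-x) * (x ^ k / k.factorial))) x := by
  have hS : HasDerivAt (fun y : ℝ => ∑ l ∈ Finset.range (k + 1), y ^ l / l.factorial)
      (∑ l ∈ Finset.range k, x ^ l / l.factorial) x := by
    have h : HasDerivAt (fun y : ℝ => ∑ l ∈ Finset.range (k + 1), y ^ l / l.factorial)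
        (∑ l ∈ Finset.range (k + 1), (l : ℝ) * x ^ (l - 1) / l.factorial) x := by
      apply HasDerivAt.fun_sum
      intro l _
      simpa [mul_comm] using (hasDerivAt_pow l x).div_const (l.factorial : ℝ)
    convert h using 1
    rw [Finset.sum_range_succ']
    simp only [Nat.cast_zero, zero_mul, zero_div, add_zero, Nat.cast_add, Nat.cast_one]
    refine Finset.sum_congr rfl fun i _ => ?_
    rw [Nat.factorial_succ]
    have hi : (i.factorial : ℝ) ≠ 0 := Nat.cast_ne_zero.2 i.factorial_ne_zero
    push_cast
    field_simp
  have he : HasDerivAt (fun y : ℝ => Real.exp (-y)) (-Real.exp (-x)) x := by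
    simpa using (hasDerivAt_neg x).exp
  have := he.fun_mul hS
  refine this.congr_deriv ?_
  rw [Finset.sum_range_succ]
  ring

private lemma gvb_anti (k : ℕ) : AntitoneOn (gvb k) (Set.Ici (0 : ℝ)) := by
  have hd : ∀ x : ℝ, HasDerivAt (gvb k) (-(Real.exp (-x) * (x ^ k / k.factorial))) x :=
    gvb_hasDerivAt k
  apply antitoneOn_of_deriv_nonpos (convex_Ici 0)
  · exact (fun x _ => (hd x).differentiableAt.continuousAt.continuousWithinAt)
  · exact fun x _ => (hd x).differentiableAt.differentiableWithinAt
  · intro x hx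
    rw [(hd x).deriv]
    have hx0 : (0 : ℝ) < x := by simpa using hx
    have : 0 ≤ Real.exp (-x) * (x ^ k / k.factorial) := by positivity
    linarith

private lemma gvb_nonneg (k : ℕ) {x : ℝ} (hx : 0 ≤ x) : 0 ≤ gvb k x := by
  unfold gvb
  have : 0 ≤ ∑ l ∈ Finset.range (k + 1), x ^ l / l.factorial :=
    Finset.sum_nonneg fun l _ => by positivity
  positivity

private lemma gvb_le_one (k : ℕ) {x : ℝ} (hx : 0 ≤ x) : gvb k x ≤ 1 := by
  unfold gvb
  have h := Real.sum_le_exp_of_nonneg hx (k + 1)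
  calc Real.exp (-x) * ∑ l ∈ Finset.range (k + 1), x ^ l / l.factorial
      ≤ Real.exp (-x) * Real.exp x := by
        exact mul_le_mul_of_nonneg_left h (Real.exp_pos _).le
    _ = 1 := by rw [← Real.exp_add]; simp

/-- The SNR gain of the optimum average power allocation (with fixed per-stream rate)
in coded V-BLAST is between 1 and `m`: for any allocation `α` (positive, total power
`m`), `P(u, m γ₀) ≤ P(α, γ₀)`, and hence
`P(u, m γ₀) ≤ inf_α P(α, γ₀) ≤ P(u, γ₀)`, where `u = (1,…,1)`. -/
theorem average_opa_snr_gain_bounds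
    (n m : ℕ) (hm : 1 ≤ m) (hmn : m ≤ n) (R : ℝ) (hR : 0 < R) (c : ℝ)
    (hc : c = Real.exp R - 1)
    (F : ℕ → ℝ → ℝ)
    (hF : ∀ k x, F k x = 1 - Real.exp (-x) * ∑ l ∈ Finset.range k, x ^ l / l.factorial)
    (P : (Fin m → ℝ) → ℝ → ℝ)
    (hP : ∀ α γ₀, P α γ₀ =
      1 - ∏ i : Fin m, (1 - F (n - m + (i : ℕ) + 1) (c / (α i * γ₀)))) :
    ∀ γ₀ : ℝ, 0 < γ₀ →
      (∀ α : Fin m → ℝ, (∀ i, 0 < α i) → ∑ i, α i = m →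
        P (fun _ => 1) (m * γ₀) ≤ P α γ₀) ∧
      (P (fun _ => 1) (m * γ₀) ≤
        ⨅ α : {α : Fin m → ℝ // (∀ i, 0 < α i) ∧ ∑ i, α i = m}, P (α : Fin m → ℝ) γ₀) ∧
      ((⨅ α : {α : Fin m → ℝ // (∀ i, 0 < α i) ∧ ∑ i, α i = m}, P (α : Fin m → ℝ) γ₀) ≤
        P (fun _ => 1) γ₀) := by
  intro γ₀ hγ₀
  have hc0 : 0 < c := by
    have : (1 : ℝ) < Real.exp R := by
      have := Real.exp_lt_exp.2 hR
      simpa [Real.exp_zero] using this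
    rw [hc]; linarith
  have hm0 : (0 : ℝ) < m := by exact_mod_cast Nat.pos_of_ne_zero (by omega)
  -- rewrite 1 - F (k+1) x as gvb k x
  have hFg : ∀ k x, 1 - F (k + 1) x = gvb k x := by
    intro k x; rw [hF]; unfold gvb; ring
  -- key per-allocation inequality
  have key : ∀ α : Fin m → ℝ, (∀ i, 0 < α i) → ∑ i, α i = m →
      P (fun _ => 1) (m * γ₀) ≤ P α γ₀ := by
    intro α hpos hsum
    rw [hP, hP]
    apply sub_le_sub_left
    apply Finset.prod_le_prod
    · intro i _
      rw [hFg]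
      exact gvb_nonneg _ (div_nonneg hc0.le (mul_nonneg (hpos i).le hγ₀.le))
    · intro i _
      rw [hFg, hFg]
      have hαi : α i ≤ m := by
        have := Finset.single_le_sum (f := α) (fun j _ => (hpos j).le) (Finset.mem_univ i)
        rw [hsum] at this; exact this
      have hx0 : (0 : ℝ) ≤ c / (1 * (m * γ₀)) := by positivity
      have hai := hpos i
      have hy0 : (0 : ℝ) ≤ c / (α i * γ₀) := by positivity
      have hxy : c / (1 * (m * γ₀)) ≤ c / (α i * γ₀) := by
        rw [one_mul]
        apply div_le_div_of_nonneg_left hc0.le (by positivity)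
        nlinarith
      exact gvb_anti _ hx0 hy0 hxy
  haveI : Nonempty {α : Fin m → ℝ // (∀ i, 0 < α i) ∧ ∑ i, α i = m} :=
    ⟨⟨fun _ => 1, fun _ => one_pos, by simp⟩⟩
  refine ⟨key, ?_, ?_⟩
  · apply le_ciInf
    rintro ⟨α, hpos, hsum⟩
    exact key α hpos hsum
  · have hbdd : BddBelow (Set.range fun α : {α : Fin m → ℝ // (∀ i, 0 < α i) ∧ ∑ i, α i = m} =>
        P (α : Fin m → ℝ) γ₀) := by
      refine ⟨0, ?_⟩
      rintro x ⟨⟨α, hpos, hsum⟩, rfl⟩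
      show (0:ℝ) ≤ P α γ₀
      rw [hP]
      have : ∏ i : Fin m, (1 - F (n - m + (i : ℕ) + 1) (c / (α i * γ₀))) ≤ 1 := by
        apply Finset.prod_le_one
        · intro i _
          rw [hFg]; exact gvb_nonneg _ (div_nonneg hc0.le (mul_nonneg (hpos i).le hγ₀.le))
        · intro i _
          rw [hFg]; exact gvb_le_one _ (div_nonneg hc0.le (mul_nonneg (hpos i).le hγ₀.le))
      linarith
    have hmem : (∀ i : Fin m, (0:ℝ) < (fun _ => (1:ℝ)) i) ∧
        ∑ i : Fin m, (fun _ => (1:ℝ)) i = m := by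
      constructor
      · intro i; norm_num
      · simp
    exact ciInf_le hbdd ⟨fun _ => 1, hmem⟩
end

section
/- Fix integers n ≥ m ≥ 1 and R > 0. Let g₁, …, g_m be independent random variables with g_i distributed as Gamma with shape n − m + i and rate 1, and define P_out^{OPRA}(γ₀) = Pr{ sup_{α ∈ S} Σ_{i=1}^m ln(1 + α_i γ₀ g_i) < mR }, where S = {α ∈ ℝ^m : α_i ≥ 0, Σ α_i = m}. Then lim_{γ₀ → ∞} ( − ln P_out^{OPRA}(γ₀) / ln γ₀ ) = m(n − (m−1)/2); i.e., the joint optimum power/rate allocation has the same diversity gain as the optimum rate allocation alone, so optimum power allocation on top of rate allocation yields no additional diversity. -/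
open MeasureTheory ProbabilityTheory Filter Set Real


lemma rpow_lintegral (a t c : ℝ) (ha : 0 < a) (ht : 0 < t) (hc : 0 ≤ c) :
    ∫⁻ x in Ioo 0 t, ENNReal.ofReal (c * x ^ (a - 1)) =
      ENNReal.ofReal (c * (t ^ a / a)) := by
  have hint : IntegrableOn (fun x : ℝ => c * x ^ (a - 1)) (Ioo 0 t) := by
    have h1 : IntervalIntegrable (fun x : ℝ => x ^ (a - 1)) volume 0 t :=
      intervalIntegral.intervalIntegrable_rpow' (by linarith)
    have h2 := (intervalIntegrable_iff_integrableOn_Ioc_of_le ht.le).mp h1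
    exact IntegrableOn.mono_set (h2.const_mul c) Ioo_subset_Ioc_self
  rw [← ofReal_integral_eq_lintegral_ofReal hint]
  · congr 1
    rw [← MeasureTheory.integral_Ioc_eq_integral_Ioo,
      ← intervalIntegral.integral_of_le ht.le, intervalIntegral.integral_const_mul,
      integral_rpow (Or.inl (by linarith))]
    rw [sub_add_cancel, Real.zero_rpow ha.ne', sub_zero]
  · rw [EventuallyLE, ae_restrict_iff' measurableSet_Ioo]
    exact ae_of_all _ fun x hx => by have := hx.1; positivity

lemma gamma_Iio_split (a t : ℝ) (ht : 0 < t) :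
    gammaMeasure a 1 (Iio t) = ∫⁻ x in Ioo 0 t, gammaPDF a 1 x := by
  rw [gammaMeasure, withDensity_apply _ measurableSet_Iio,
    ← Iio_union_Ico_eq_Iio ht.le, lintegral_union measurableSet_Ico
      ((Iio_disjoint_Ici le_rfl).mono_right Ico_subset_Ici_self),
    lintegral_gammaPDF_of_nonpos le_rfl, zero_add,
    setLIntegral_congr (Ioo_ae_eq_Ico (a := (0:ℝ)) (b := t)).symm]

lemma gamma_Iio_le (a t : ℝ) (ha : 0 < a) (ht : 0 < t) :
    gammaMeasure a 1 (Iio t) ≤ ENNReal.ofReal (t ^ a / (a * Real.Gamma a)) := by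
  have hG : 0 < Real.Gamma a := Real.Gamma_pos_of_pos ha
  rw [gamma_Iio_split a t ht]
  calc ∫⁻ x in Ioo 0 t, gammaPDF a 1 x
      ≤ ∫⁻ x in Ioo 0 t, ENNReal.ofReal ((1 / Real.Gamma a) * x ^ (a - 1)) := by
        refine setLIntegral_mono_ae (by fun_prop) (ae_of_all _ fun x hx => ?_)
        rw [gammaPDF_of_nonneg hx.1.le]
        refine ENNReal.ofReal_le_ofReal ?_
        rw [Real.one_rpow, one_mul]
        have hx0 : (0:ℝ) < x := hx.1
        have hxp : (0:ℝ) ≤ x ^ (a - 1) := Real.rpow_nonneg hx0.le _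
        have hexp : Real.exp (-x) ≤ 1 := by
          rw [← Real.exp_zero]; exact Real.exp_le_exp.mpr (by linarith)
        exact mul_le_of_le_one_right (by positivity) hexp
    _ = ENNReal.ofReal ((1 / Real.Gamma a) * (t ^ a / a)) :=
        rpow_lintegral a t _ ha ht (by positivity)
    _ = ENNReal.ofReal (t ^ a / (a * Real.Gamma a)) := by
        congr 1; rw [div_mul_eq_mul_div, one_mul, div_div]

lemma gamma_Iio_ge (a t : ℝ) (ha : 0 < a) (ht : 0 < t) :
    ENNReal.ofReal (Real.exp (-t) * (t ^ a / (a * Real.Gamma a))) ≤ gammaMeasure a 1 (Iio t) := by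
  have hG : 0 < Real.Gamma a := Real.Gamma_pos_of_pos ha
  rw [gamma_Iio_split a t ht]
  calc ENNReal.ofReal (Real.exp (-t) * (t ^ a / (a * Real.Gamma a)))
      = ∫⁻ x in Ioo 0 t, ENNReal.ofReal ((Real.exp (-t) / Real.Gamma a) * x ^ (a - 1)) := by
        rw [rpow_lintegral a t _ ha ht (by positivity)]
        congr 1; field_simp
    _ ≤ ∫⁻ x in Ioo 0 t, gammaPDF a 1 x := by
        refine setLIntegral_mono_ae (((measurable_gammaPDFReal a 1).ennreal_ofReal : Measurable (gammaPDF a 1)).aemeasurable)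
          (ae_of_all _ fun x hx => ?_)
        rw [gammaPDF_of_nonneg hx.1.le]
        refine ENNReal.ofReal_le_ofReal ?_
        rw [Real.one_rpow, one_mul]
        have hx0 : (0:ℝ) < x := hx.1
        have hxp : (0:ℝ) ≤ x ^ (a - 1) := Real.rpow_nonneg hx0.le _
        have hexp : Real.exp (-t) ≤ Real.exp (-x) := Real.exp_le_exp.mpr (by linarith [hx.2])
        calc Real.exp (-t) / Real.Gamma a * x ^ (a - 1)
            ≤ Real.exp (-x) / Real.Gamma a * x ^ (a - 1) := by gcongr
          _ = 1 / Real.Gamma a * x ^ (a - 1) * Real.exp (-x) := by ring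

noncomputable def gP (a t : ℝ) : ℝ := (gammaMeasure a 1 (Iio t)).toReal

lemma gP_le (a t : ℝ) (ha : 0 < a) (ht : 0 < t) :
    gP a t ≤ t ^ a / (a * Real.Gamma a) :=
  ENNReal.toReal_le_of_le_ofReal (by have := Real.Gamma_pos_of_pos ha; positivity)
    (gamma_Iio_le a t ha ht)

lemma gP_ge (a t : ℝ) (ha : 0 < a) (ht : 0 < t) :
    Real.exp (-t) * (t ^ a / (a * Real.Gamma a)) ≤ gP a t := by
  have hne : gammaMeasure a 1 (Iio t) ≠ ⊤ :=
    ne_top_of_le_ne_top ENNReal.ofReal_ne_top (gamma_Iio_le a t ha ht)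
  exact (ENNReal.ofReal_le_iff_le_toReal hne).mp (gamma_Iio_ge a t ha ht)

lemma gP_pos (a t : ℝ) (ha : 0 < a) (ht : 0 < t) : 0 < gP a t :=
  lt_of_lt_of_le (by have := Real.Gamma_pos_of_pos ha; positivity) (gP_ge a t ha ht)

lemma gP_log_tendsto (a c : ℝ) (ha : 0 < a) (hc : 0 < c) :
    Tendsto (fun γ : ℝ => -Real.log (gP a (c / γ)) / Real.log γ) atTop (nhds a) := by
  have hC : 0 < a * Real.Gamma a := by have := Real.Gamma_pos_of_pos ha; positivity
  set K : ℝ := Real.log (a * Real.Gamma a) - a * Real.log c with hK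
  have hlo : Tendsto (fun γ : ℝ => a + K / Real.log γ) atTop (nhds a) := by
    have := Tendsto.div_atTop (tendsto_const_nhds (x := K)) Real.tendsto_log_atTop
    simpa using (tendsto_const_nhds (x := a)).add this
  have hhi : Tendsto (fun γ : ℝ => a + (K + c / γ) / Real.log γ) atTop (nhds a) := by
    have h1 : Tendsto (fun γ : ℝ => K + c / γ) atTop (nhds (K + 0)) :=
      (tendsto_const_nhds).add (Tendsto.div_atTop tendsto_const_nhds tendsto_id)
    have := Tendsto.div_atTop h1 Real.tendsto_log_atTop
    simpa using (tendsto_const_nhds (x := a)).add this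
  refine tendsto_of_tendsto_of_tendsto_of_le_of_le' hlo hhi ?_ ?_
  · filter_upwards [eventually_gt_atTop (1:ℝ)] with γ hγ
    have hγ0 : (0:ℝ) < γ := lt_trans one_pos hγ
    have ht : 0 < c / γ := div_pos hc hγ0
    have hlog : 0 < Real.log γ := Real.log_pos hγ
    have hup : Real.log (gP a (c / γ)) ≤ a * Real.log (c / γ) - Real.log (a * Real.Gamma a) := by
      calc Real.log (gP a (c / γ)) ≤ Real.log ((c / γ) ^ a / (a * Real.Gamma a)) :=
            Real.log_le_log (gP_pos a _ ha ht) (gP_le a _ ha ht)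
        _ = a * Real.log (c / γ) - Real.log (a * Real.Gamma a) := by
            rw [Real.log_div (by positivity) hC.ne', Real.log_rpow ht]
    have hlogdiv : Real.log (c / γ) = Real.log c - Real.log γ := Real.log_div hc.ne' hγ0.ne'
    have h2 : a * Real.log γ + K ≤ -Real.log (gP a (c / γ)) := by
      rw [hlogdiv] at hup; rw [hK]; linarith
    calc a + K / Real.log γ = (a * Real.log γ + K) / Real.log γ := by field_simp
      _ ≤ -Real.log (gP a (c / γ)) / Real.log γ := by gcongr
  · filter_upwards [eventually_gt_atTop (1:ℝ)] with γ hγ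
    have hγ0 : (0:ℝ) < γ := lt_trans one_pos hγ
    have ht : 0 < c / γ := div_pos hc hγ0
    have hlog : 0 < Real.log γ := Real.log_pos hγ
    have hdown : -(c / γ) + (a * Real.log (c / γ) - Real.log (a * Real.Gamma a))
        ≤ Real.log (gP a (c / γ)) := by
      calc -(c / γ) + (a * Real.log (c / γ) - Real.log (a * Real.Gamma a))
          = Real.log (Real.exp (-(c / γ)) * ((c / γ) ^ a / (a * Real.Gamma a))) := by
            rw [Real.log_mul (Real.exp_ne_zero _) (by positivity), Real.log_exp,
              Real.log_div (by positivity) hC.ne', Real.log_rpow ht]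
        _ ≤ Real.log (gP a (c / γ)) :=
            Real.log_le_log (by have := Real.Gamma_pos_of_pos ha; positivity) (gP_ge a _ ha ht)
    have hlogdiv : Real.log (c / γ) = Real.log c - Real.log γ := Real.log_div hc.ne' hγ0.ne'
    have h2 : -Real.log (gP a (c / γ)) ≤ a * Real.log γ + (K + c / γ) := by
      rw [hlogdiv] at hdown; rw [hK]; linarith
    calc -Real.log (gP a (c / γ)) / Real.log γ
        ≤ (a * Real.log γ + (K + c / γ)) / Real.log γ := by gcongr
      _ = a + (K + c / γ) / Real.log γ := by field_simp

/-- Diversity gain of the joint optimum power/rate allocation (OPRA, realized by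
fractional waterfilling) in coded V-BLAST: with independent Gamma-distributed gains of
shapes `n−m+i`, the outage probability of the waterfilled sum capacity has diversity
gain `m(n−(m−1)/2)` — the same as the optimum rate allocation alone. -/
theorem opra_diversity_gain
    {Ω : Type*} [MeasurableSpace Ω] (μ : Measure Ω) [IsProbabilityMeasure μ]
    (n m : ℕ) (hm : 1 ≤ m) (hmn : m ≤ n) (R : ℝ) (hR : 0 < R)
    (g : Fin m → Ω → ℝ) (hg : ∀ i, Measurable (g i))
    (hind : iIndepFun g μ)
    (hlaw : ∀ i : Fin m, Measure.map (g i) μ = gammaMeasure (n - m + (i : ℕ) + 1) 1) :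
    Tendsto
      (fun γ₀ : ℝ =>
        -Real.log
            ((μ {ω | (⨆ α : {α : Fin m → ℝ // (∀ i, 0 ≤ α i) ∧ ∑ i, α i = m},
                ∑ i, Real.log (1 + (α : Fin m → ℝ) i * γ₀ * g i ω)) < m * R}).toReal) /
          Real.log γ₀)
      atTop (nhds ((m : ℝ) * ((n : ℝ) - ((m : ℝ) - 1) / 2))) := by
  have hm0 : (0:ℝ) < m := by exact_mod_cast hm
  have hnm : (m:ℝ) ≤ n := by exact_mod_cast hmn
  set a : Fin m → ℝ := fun i => (n:ℝ) - (m:ℝ) + ((i:ℕ):ℝ) + 1 with ha_def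
  have ha : ∀ i, 0 < a i := fun i => by
    have : (0:ℝ) ≤ ((i:ℕ):ℝ) := Nat.cast_nonneg _
    simp only [ha_def]; linarith
  -- the diversity order as a sum
  have hD : ∑ i, a i = (m : ℝ) * ((n : ℝ) - ((m : ℝ) - 1) / 2) := by
    have hGauss : ∑ i : Fin m, ((i:ℕ):ℝ) = ((m:ℝ) * ((m:ℝ) - 1)) / 2 := by
      rw [Fin.sum_univ_eq_sum_range (fun k => ((k:ℕ):ℝ))]
      have h2 := Finset.sum_range_id_mul_two m
      have : ((∑ k ∈ Finset.range m, k : ℕ) : ℝ) * 2 = (m:ℝ) * ((m:ℝ) - 1) := by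
        rw [← Nat.cast_ofNat, ← Nat.cast_mul, h2]
        push_cast [Nat.cast_sub hm]
        ring
      push_cast at this ⊢
      linarith
    simp only [ha_def]
    rw [show (fun i : Fin m => (n:ℝ) - (m:ℝ) + ((i:ℕ):ℝ) + 1)
        = fun i : Fin m => ((n:ℝ) - (m:ℝ) + 1) + ((i:ℕ):ℝ) by funext i; ring]
    rw [Finset.sum_add_distrib, Finset.sum_const, hGauss, Finset.card_univ, Fintype.card_fin,
      nsmul_eq_mul]
    ring
  -- per-coordinate law of small balls
  have hmap : ∀ (i : Fin m) (t : ℝ), μ {ω | g i ω < t} = gammaMeasure (a i) 1 (Iio t) := by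
    intro i t
    rw [show {ω | g i ω < t} = g i ⁻¹' (Iio t) from rfl,
      ← Measure.map_apply (hg i) measurableSet_Iio, hlaw i]
  have hprod : ∀ t : ℝ, μ {ω | ∀ i, g i ω < t} = ∏ i, gammaMeasure (a i) 1 (Iio t) := by
    intro t
    have hset : {ω | ∀ i, g i ω < t} = ⋂ i, g i ⁻¹' (Iio t) := by ext ω; simp [Set.mem_iInter]
    rw [hset, hind.meas_iInter (fun i => ⟨Iio t, measurableSet_Iio, rfl⟩)]
    exact Finset.prod_congr rfl fun i _ => hmap i t
  have hNnull : μ {ω | ¬ ∀ i, 0 ≤ g i ω} = 0 := by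
    have hset : {ω | ¬ ∀ i, 0 ≤ g i ω} = ⋃ i, g i ⁻¹' (Iio 0) := by
      ext ω; simp [not_forall, not_le]
    rw [hset]
    refine measure_iUnion_null fun i => ?_
    rw [← Measure.map_apply (hg i) measurableSet_Iio, hlaw i, gammaMeasure,
      withDensity_apply _ measurableSet_Iio, lintegral_gammaPDF_of_nonpos le_rfl]
  -- constants
  set c₁ : ℝ := (Real.exp R - 1) / m with hc₁def
  set c₂ : ℝ := (Real.exp ((m:ℝ) * R) - 1) / m with hc₂def
  have hc₁ : 0 < c₁ := by
    have : (1:ℝ) < Real.exp R := by rw [← Real.exp_zero]; exact Real.exp_lt_exp.mpr hR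
    exact div_pos (by linarith) hm0
  have hc₂ : 0 < c₂ := by
    have : (1:ℝ) < Real.exp ((m:ℝ) * R) := by
      rw [← Real.exp_zero]; exact Real.exp_lt_exp.mpr (by positivity)
    exact div_pos (by linarith) hm0
  -- deterministic facts about the supremum
  haveI hTne : Nonempty {α : Fin m → ℝ // (∀ i, 0 ≤ α i) ∧ ∑ i, α i = m} :=
    ⟨⟨fun _ => 1, fun _ => zero_le_one, by simp⟩⟩
  have hαle : ∀ (α : {α : Fin m → ℝ // (∀ i, 0 ≤ α i) ∧ ∑ i, α i = m}) (i : Fin m),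
      (α : Fin m → ℝ) i ≤ m := by
    intro α i
    calc (α : Fin m → ℝ) i ≤ ∑ j, (α : Fin m → ℝ) j :=
          Finset.single_le_sum (fun j _ => α.2.1 j) (Finset.mem_univ i)
      _ = m := α.2.2
  have hterm : ∀ (γ : ℝ), 0 ≤ γ → ∀ (ω : Ω)
      (α : {α : Fin m → ℝ // (∀ i, 0 ≤ α i) ∧ ∑ i, α i = m}) (i : Fin m),
      Real.log (1 + (α : Fin m → ℝ) i * γ * g i ω)
        ≤ Real.log (1 + (m:ℝ) * γ * |g i ω|) := by
    intro γ hγ ω α i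
    have hy1 : (1:ℝ) ≤ 1 + (m:ℝ) * γ * |g i ω| := by
      have : (0:ℝ) ≤ (m:ℝ) * γ * |g i ω| := by positivity
      linarith
    have habs : |1 + (α : Fin m → ℝ) i * γ * g i ω| ≤ 1 + (m:ℝ) * γ * |g i ω| := by
      have h1 : |(α : Fin m → ℝ) i * γ * g i ω| ≤ (m:ℝ) * γ * |g i ω| := by
        rw [abs_mul, abs_mul, abs_of_nonneg (α.2.1 i), abs_of_nonneg hγ]
        have := α.2.1 i
        gcongr
        exact hαle α i
      calc |1 + (α : Fin m → ℝ) i * γ * g i ω|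
          ≤ |(1:ℝ)| + |(α : Fin m → ℝ) i * γ * g i ω| := abs_add_le _ _
        _ ≤ 1 + (m:ℝ) * γ * |g i ω| := by rw [abs_one]; linarith
    rcases eq_or_ne (1 + (α : Fin m → ℝ) i * γ * g i ω) 0 with h0 | h0
    · rw [h0, Real.log_zero]
      exact Real.log_nonneg hy1
    · rw [← Real.log_abs]
      exact Real.log_le_log (abs_pos.mpr h0) habs
  have hbdd : ∀ (γ : ℝ), 0 ≤ γ → ∀ ω : Ω,
      BddAbove (Set.range fun α : {α : Fin m → ℝ // (∀ i, 0 ≤ α i) ∧ ∑ i, α i = m} =>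
        ∑ i, Real.log (1 + (α : Fin m → ℝ) i * γ * g i ω)) := by
    intro γ hγ ω
    refine ⟨∑ i, Real.log (1 + (m:ℝ) * γ * |g i ω|), ?_⟩
    rintro x ⟨α, rfl⟩
    exact Finset.sum_le_sum fun i _ => hterm γ hγ ω α i
  haveI hFinNe : Nonempty (Fin m) := ⟨⟨0, hm⟩⟩
  -- Claim 1: small gains imply outage
  have claim1 : ∀ (γ : ℝ), 0 < γ → ∀ ω : Ω, (∀ i, 0 ≤ g i ω) → (∀ i, g i ω < c₁ / γ) →
      (⨆ α : {α : Fin m → ℝ // (∀ i, 0 ≤ α i) ∧ ∑ i, α i = m},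
        ∑ i, Real.log (1 + (α : Fin m → ℝ) i * γ * g i ω)) < m * R := by
    intro γ hγ ω hpos hsmall
    have hb : ∀ α : {α : Fin m → ℝ // (∀ i, 0 ≤ α i) ∧ ∑ i, α i = m},
        ∑ i, Real.log (1 + (α : Fin m → ℝ) i * γ * g i ω)
          ≤ ∑ i, Real.log (1 + (m:ℝ) * γ * g i ω) := by
      intro α
      refine Finset.sum_le_sum fun i _ => ?_
      have := hterm γ hγ.le ω α i
      rwa [abs_of_nonneg (hpos i)] at this
    have hsum : ∑ i, Real.log (1 + (m:ℝ) * γ * g i ω) < m * R := by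
      have hlt : ∀ i ∈ Finset.univ, Real.log (1 + (m:ℝ) * γ * g i ω) < R := by
        intro i _
        have h1 : (0:ℝ) < 1 + (m:ℝ) * γ * g i ω := by
          have : (0:ℝ) ≤ (m:ℝ) * γ * g i ω := mul_nonneg (mul_nonneg hm0.le hγ.le) (hpos i)
          linarith
        have h2 : 1 + (m:ℝ) * γ * g i ω < Real.exp R := by
          have hgi : γ * g i ω < c₁ := by
            have := hsmall i
            rw [lt_div_iff₀ hγ] at this
            linarith [this]
          have : (m:ℝ) * (γ * g i ω) < (m:ℝ) * c₁ := mul_lt_mul_of_pos_left hgi hm0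
          have hmc : (m:ℝ) * c₁ = Real.exp R - 1 := by
            rw [hc₁def, mul_div_cancel₀ _ hm0.ne']
          nlinarith
        calc Real.log (1 + (m:ℝ) * γ * g i ω) < Real.log (Real.exp R) := Real.log_lt_log h1 h2
          _ = R := Real.log_exp R
      calc ∑ i, Real.log (1 + (m:ℝ) * γ * g i ω) < ∑ _i : Fin m, R :=
            Finset.sum_lt_sum_of_nonempty Finset.univ_nonempty hlt
        _ = m * R := by rw [Finset.sum_const, Finset.card_univ, Fintype.card_fin, nsmul_eq_mul]
    exact lt_of_le_of_lt (ciSup_le hb) hsum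
  -- Claim 2: outage implies small gains
  have claim2 : ∀ (γ : ℝ), 0 < γ → ∀ ω : Ω, (∀ i, 0 ≤ g i ω) →
      (⨆ α : {α : Fin m → ℝ // (∀ i, 0 ≤ α i) ∧ ∑ i, α i = m},
        ∑ i, Real.log (1 + (α : Fin m → ℝ) i * γ * g i ω)) < m * R →
      ∀ i, g i ω < c₂ / γ := by
    intro γ hγ ω hpos hsup i
    set αi : {α : Fin m → ℝ // (∀ i, 0 ≤ α i) ∧ ∑ i, α i = m} :=
      ⟨fun j => if j = i then (m:ℝ) else 0,
        fun j => by dsimp only; split <;> simp [hm0.le],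
        by rw [Finset.sum_ite_eq' Finset.univ i (fun _ => (m:ℝ))]; simp⟩ with hαi
    have hval : ∑ j, Real.log (1 + (αi : Fin m → ℝ) j * γ * g j ω)
        = Real.log (1 + (m:ℝ) * γ * g i ω) := by
      rw [Finset.sum_eq_single i]
      · simp [hαi]
      · intro j _ hji
        simp [hαi, if_neg hji]
      · intro h; exact absurd (Finset.mem_univ i) h
    have hle := le_ciSup (hbdd γ hγ.le ω) αi
    rw [hval] at hle
    have hlog : Real.log (1 + (m:ℝ) * γ * g i ω) < (m:ℝ) * R := lt_of_le_of_lt hle hsup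
    have h1 : (0:ℝ) < 1 + (m:ℝ) * γ * g i ω := by
      have : (0:ℝ) ≤ (m:ℝ) * γ * g i ω := mul_nonneg (mul_nonneg hm0.le hγ.le) (hpos i)
      linarith
    have h2 : 1 + (m:ℝ) * γ * g i ω < Real.exp ((m:ℝ) * R) := by
      calc 1 + (m:ℝ) * γ * g i ω = Real.exp (Real.log (1 + (m:ℝ) * γ * g i ω)) :=
            (Real.exp_log h1).symm
        _ < Real.exp ((m:ℝ) * R) := Real.exp_lt_exp.mpr hlog
    have hmc : (m:ℝ) * c₂ = Real.exp ((m:ℝ) * R) - 1 := by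
      rw [hc₂def, mul_div_cancel₀ _ hm0.ne']
    rw [lt_div_iff₀ hγ]
    nlinarith
  -- limit of the product bound
  have hplim : ∀ c : ℝ, 0 < c →
      Tendsto (fun γ : ℝ => -Real.log (∏ i, gP (a i) (c / γ)) / Real.log γ) atTop
        (nhds ((m : ℝ) * ((n : ℝ) - ((m : ℝ) - 1) / 2))) := by
    intro c hc
    rw [← hD]
    have hsum := tendsto_finset_sum (f := fun (i : Fin m) (γ : ℝ) =>
        -Real.log (gP (a i) (c / γ)) / Real.log γ) Finset.univ
      (fun i _ => gP_log_tendsto (a i) c (ha i) hc)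
    refine Tendsto.congr' ?_ hsum
    filter_upwards [eventually_gt_atTop (1:ℝ)] with γ hγ
    have hγ0 : (0:ℝ) < γ := lt_trans one_pos hγ
    have ht : 0 < c / γ := div_pos hc hγ0
    rw [Real.log_prod (fun i _ => (gP_pos (a i) _ (ha i) ht).ne'),
      ← Finset.sum_div, ← Finset.sum_neg_distrib]
  -- sandwich the outage probability
  have hsand : ∀ γ : ℝ, 1 < γ →
      (∏ i, gP (a i) (c₁ / γ))
        ≤ (μ {ω | (⨆ α : {α : Fin m → ℝ // (∀ i, 0 ≤ α i) ∧ ∑ i, α i = m},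
            ∑ i, Real.log (1 + (α : Fin m → ℝ) i * γ * g i ω)) < m * R}).toReal ∧
      (μ {ω | (⨆ α : {α : Fin m → ℝ // (∀ i, 0 ≤ α i) ∧ ∑ i, α i = m},
            ∑ i, Real.log (1 + (α : Fin m → ℝ) i * γ * g i ω)) < m * R}).toReal
        ≤ ∏ i, gP (a i) (c₂ / γ) := by
    intro γ hγ
    have hγ0 : (0:ℝ) < γ := lt_trans one_pos hγ
    set E : Set Ω := {ω | (⨆ α : {α : Fin m → ℝ // (∀ i, 0 ≤ α i) ∧ ∑ i, α i = m},
        ∑ i, Real.log (1 + (α : Fin m → ℝ) i * γ * g i ω)) < m * R} with hE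
    have h1 : μ {ω | ∀ i, g i ω < c₁ / γ} ≤ μ E := by
      calc μ {ω | ∀ i, g i ω < c₁ / γ}
          ≤ μ (({ω | ∀ i, g i ω < c₁ / γ} ∩ {ω | ∀ i, 0 ≤ g i ω}) ∪ {ω | ¬ ∀ i, 0 ≤ g i ω}) := by
            refine measure_mono fun ω hω => ?_
            by_cases h : ∀ i, 0 ≤ g i ω
            · exact Or.inl ⟨hω, h⟩
            · exact Or.inr h
        _ ≤ μ ({ω | ∀ i, g i ω < c₁ / γ} ∩ {ω | ∀ i, 0 ≤ g i ω}) + μ {ω | ¬ ∀ i, 0 ≤ g i ω} :=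
            measure_union_le _ _
        _ = μ ({ω | ∀ i, g i ω < c₁ / γ} ∩ {ω | ∀ i, 0 ≤ g i ω}) := by rw [hNnull, add_zero]
        _ ≤ μ E := measure_mono fun ω hω => claim1 γ hγ0 ω hω.2 hω.1
    have h2 : μ E ≤ μ {ω | ∀ i, g i ω < c₂ / γ} := by
      calc μ E ≤ μ ({ω | ∀ i, g i ω < c₂ / γ} ∪ {ω | ¬ ∀ i, 0 ≤ g i ω}) := by
            refine measure_mono fun ω hω => ?_
            by_cases h : ∀ i, 0 ≤ g i ω
            · exact Or.inl (claim2 γ hγ0 ω h hω)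
            · exact Or.inr h
        _ ≤ μ {ω | ∀ i, g i ω < c₂ / γ} + μ {ω | ¬ ∀ i, 0 ≤ g i ω} := measure_union_le _ _
        _ = μ {ω | ∀ i, g i ω < c₂ / γ} := by rw [hNnull, add_zero]
    constructor
    · have := ENNReal.toReal_mono (measure_ne_top μ E) h1
      rwa [hprod (c₁ / γ), ENNReal.toReal_prod] at this
    · have := ENNReal.toReal_mono (measure_ne_top μ _) h2
      rwa [hprod (c₂ / γ), ENNReal.toReal_prod] at this
  have hppos : ∀ (c : ℝ), 0 < c → ∀ (γ : ℝ), 1 < γ → 0 < ∏ i, gP (a i) (c / γ) := by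
    intro c hc γ hγ
    exact Finset.prod_pos fun i _ => gP_pos (a i) _ (ha i) (div_pos hc (lt_trans one_pos hγ))
  refine tendsto_of_tendsto_of_tendsto_of_le_of_le' (hplim c₂ hc₂) (hplim c₁ hc₁) ?_ ?_
  · filter_upwards [eventually_gt_atTop (1:ℝ)] with γ hγ
    have hγ0 : (0:ℝ) < γ := lt_trans one_pos hγ
    have hlog : 0 < Real.log γ := Real.log_pos hγ
    have hq : 0 < (μ {ω | (⨆ α : {α : Fin m → ℝ // (∀ i, 0 ≤ α i) ∧ ∑ i, α i = m},
        ∑ i, Real.log (1 + (α : Fin m → ℝ) i * γ * g i ω)) < m * R}).toReal :=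
      lt_of_lt_of_le (hppos c₁ hc₁ γ hγ) (hsand γ hγ).1
    have hlq := Real.log_le_log hq (hsand γ hγ).2
    gcongr
  · filter_upwards [eventually_gt_atTop (1:ℝ)] with γ hγ
    have hγ0 : (0:ℝ) < γ := lt_trans one_pos hγ
    have hlog : 0 < Real.log γ := Real.log_pos hγ
    have hlq := Real.log_le_log (hppos c₁ hc₁ γ hγ) (hsand γ hγ).1
    gcongr
end

section
/- Let g be a random variable whose law is the exponential distribution with rate 1 (i.e., Gamma with shape 1 and rate 1). Then lim_{γ₀ → ∞} ( E[ ln(1 + γ₀ g) ] − ln γ₀ ) = −γ_E, where γ_E ≈ 0.577 is the Euler–Mascheroni constant; i.e., the mean per-stream capacity of a stream with exponentially distributed gain satisfies E[ln(1 + γ₀ g)] ≈ ln γ₀ − γ_E at high SNR. -/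
open MeasureTheory ProbabilityTheory Filter Set
open scoped ENNReal NNReal

private lemma integrableOn_log_mul_exp :
    IntegrableOn (fun t : ℝ => Real.log t * Real.exp (-t)) (Set.Ioi 0) := by
  have hfc : LocallyIntegrableOn (fun t : ℝ => (Real.exp (-t) : ℂ)) (Ioi 0) := by
    refine (Continuous.continuousOn ?_).locallyIntegrableOn measurableSet_Ioi
    exact Complex.continuous_ofReal.comp (Real.continuous_exp.comp continuous_neg)
  have hf_top : (fun t : ℝ => (Real.exp (-t) : ℂ)) =O[atTop] (· ^ (-(2:ℝ))) := by
    rw [← Asymptotics.isBigO_norm_left]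
    simp_rw [Complex.norm_real,
      Asymptotics.isBigO_norm_left]
    simpa only [neg_one_mul] using
      (isLittleO_exp_neg_mul_rpow_atTop zero_lt_one _).isBigO
  have hf_bot : (fun t : ℝ => (Real.exp (-t) : ℂ)) =O[nhdsWithin 0 (Ioi 0)] (· ^ (-(0:ℝ))) := by
    simp_rw [neg_zero, Real.rpow_zero]
    refine Asymptotics.isBigO_const_of_tendsto (?_ : Tendsto _ _ (nhds (1 : ℂ))) one_ne_zero
    rw [(by simp : (1 : ℂ) = Real.exp (-0))]
    exact (Complex.continuous_ofReal.comp
      (Real.continuous_exp.comp continuous_neg)).continuousWithinAt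
  have h := (mellin_hasDerivAt_of_isBigO_rpow (s := 1) hfc hf_top
    (by norm_num) hf_bot (by norm_num)).1
  have h2 : IntegrableOn (fun t : ℝ => ((Real.log t * Real.exp (-t) : ℝ) : ℂ)) (Ioi 0) := by
    refine IntegrableOn.congr_fun h (fun t _ => ?_) measurableSet_Ioi
    simp only [sub_self, Complex.cpow_zero, one_smul, Complex.real_smul]
    push_cast
    ring
  exact IntegrableOn.congr_fun h2.re (fun t _ => by simp only [RCLike.re_to_complex, Complex.ofReal_re]) measurableSet_Ioi

private lemma integral_log_mul_exp :
    ∫ t in Ioi (0:ℝ), Real.log t * Real.exp (-t) = -Real.eulerMascheroniConstant := by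
  set I : ℝ := ∫ t in Ioi (0:ℝ), Real.log t * Real.exp (-t) with hI
  have hd : HasDerivAt Complex.GammaIntegral
      (∫ t : ℝ in Ioi 0, (t : ℂ) ^ ((1:ℂ) - 1) * (Real.log t * Real.exp (-t))) 1 :=
    Complex.hasDerivAt_GammaIntegral (by norm_num)
  have hval : (∫ t : ℝ in Ioi 0, (t : ℂ) ^ ((1:ℂ) - 1) * (Real.log t * Real.exp (-t)))
      = (I : ℂ) := by
    have h1 : (∫ t : ℝ in Ioi 0, (t : ℂ) ^ ((1:ℂ) - 1) * (Real.log t * Real.exp (-t)))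
        = ∫ t : ℝ in Ioi 0, ((Real.log t * Real.exp (-t) : ℝ) : ℂ) := by
      refine setIntegral_congr_fun measurableSet_Ioi (fun t _ => ?_)
      simp only [sub_self, Complex.cpow_zero, one_mul]
      push_cast
      ring
    rw [h1, hI]
    exact integral_ofReal (𝕜 := ℂ) (f := fun t => Real.log t * Real.exp (-t))
  rw [hval] at hd
  have hEq : Complex.Gamma =ᶠ[nhds 1] Complex.GammaIntegral := by
    have hopen : IsOpen {s : ℂ | 0 < s.re} := isOpen_lt continuous_const Complex.continuous_re
    refine eventuallyEq_of_mem (hopen.mem_nhds (by norm_num)) (fun s hs => ?_)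
    exact Complex.Gamma_eq_integral hs
  have hG : HasDerivAt Complex.Gamma (I : ℂ) 1 := hd.congr_of_eventuallyEq hEq
  have hG' : HasDerivAt Complex.Gamma (I : ℂ) ((1:ℝ) : ℂ) := by
    rwa [Complex.ofReal_one]
  have hR : HasDerivAt Real.Gamma ((I : ℂ)).re 1 := hG'.real_of_complex
  have h0 := Real.deriv_Gamma_nat 0
  simp only [Nat.cast_zero, zero_add, Nat.factorial_zero, Nat.cast_one, one_mul,
    harmonic_zero, Rat.cast_zero, add_zero] at h0
  rw [hR.deriv] at h0
  simpa using h0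

private lemma bound_integrable' :
    IntegrableOn (fun x : ℝ => Real.exp (-x) * (|Real.log x| + x)) (Ioi 0) := by
  have h1 : IntegrableOn (fun x : ℝ => |Real.log x| * Real.exp (-x)) (Ioi 0) := by
    refine IntegrableOn.congr_fun integrableOn_log_mul_exp.norm (fun x _ => ?_) measurableSet_Ioi
    rw [Real.norm_eq_abs, abs_mul, abs_of_pos (Real.exp_pos _)]
  have h2 : IntegrableOn (fun x : ℝ => Real.exp (-x) * x ^ ((2:ℝ) - 1)) (Ioi 0) :=
    Real.GammaIntegral_convergent (by norm_num)
  refine IntegrableOn.congr_fun (h1.add h2) (fun x hx => ?_) measurableSet_Ioi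
  simp only [Pi.add_apply]
  rw [show (2:ℝ) - 1 = 1 by norm_num, Real.rpow_one]
  ring

private lemma abs_log_add_le {ε x : ℝ} (hε : 0 < ε) (hε1 : ε ≤ 1) (hx : 0 < x) :
    |Real.log (ε + x)| ≤ |Real.log x| + x := by
  rw [abs_le]
  constructor
  · have h1 : Real.log x ≤ Real.log (ε + x) := Real.log_le_log hx (by linarith)
    have h2 : -|Real.log x| ≤ Real.log x := neg_abs_le _
    linarith
  · have h1 : Real.log (ε + x) ≤ ε + x - 1 := Real.log_le_sub_one_of_pos (by linarith)
    have h2 := abs_nonneg (Real.log x)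
    linarith

/-- High-SNR expansion of the mean per-stream capacity with an exponentially
distributed gain (Gamma with shape 1 and rate 1):
`E[ln(1 + γ₀ g)] − ln γ₀ → −γ_E` as `γ₀ → ∞`, where `γ_E` is the Euler–Mascheroni
constant. -/
theorem mean_capacity_high_snr
    {Ω : Type*} [MeasurableSpace Ω] (μ : Measure Ω) [IsProbabilityMeasure μ]
    (g : Ω → ℝ) (hg : Measurable g)
    (hlaw : Measure.map g μ = gammaMeasure 1 1) :
    Tendsto (fun γ₀ : ℝ => (∫ ω, Real.log (1 + γ₀ * g ω) ∂μ) - Real.log γ₀)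
      atTop (nhds (-Real.eulerMascheroniConstant)) := by
  -- Step 1: rewrite the expression for `γ₀ ≥ 1`.
  have key : ∀ γ₀ : ℝ, 1 ≤ γ₀ →
      (∫ ω, Real.log (1 + γ₀ * g ω) ∂μ) - Real.log γ₀
        = ∫ x in Ioi (0:ℝ), Real.exp (-x) * Real.log (γ₀⁻¹ + x) := by
    intro γ₀ hγ
    have hγ0 : (0:ℝ) < γ₀ := lt_of_lt_of_le one_pos hγ
    have hmeas : Measurable fun x : ℝ => Real.log (1 + γ₀ * x) :=
      Real.measurable_log.comp (measurable_const.add (measurable_id.const_mul γ₀))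
    have h1 : (∫ ω, Real.log (1 + γ₀ * g ω) ∂μ)
        = ∫ x, Real.log (1 + γ₀ * x) ∂(Measure.map g μ) :=
      (integral_map hg.aemeasurable hmeas.aestronglyMeasurable).symm
    have h2 : ∫ x, Real.log (1 + γ₀ * x) ∂(gammaMeasure 1 1)
        = ∫ x, gammaPDFReal 1 1 x * Real.log (1 + γ₀ * x) := by
      rw [gammaMeasure,
        show (gammaPDF 1 1) = fun x => ((Real.toNNReal (gammaPDFReal 1 1 x) : ℝ≥0) : ℝ≥0∞) from
          rfl,
        integral_withDensity_eq_integral_smul (measurable_gammaPDFReal 1 1).real_toNNReal]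
      refine integral_congr_ae (Filter.Eventually.of_forall fun x => ?_)
      show ((gammaPDFReal 1 1 x).toNNReal : ℝ≥0) • Real.log (1 + γ₀ * x)
        = gammaPDFReal 1 1 x * Real.log (1 + γ₀ * x)
      rw [NNReal.smul_def, Real.coe_toNNReal _ (gammaPDFReal_nonneg one_pos one_pos x),
        smul_eq_mul]
    have h3 : ∫ x, gammaPDFReal 1 1 x * Real.log (1 + γ₀ * x)
        = ∫ x in Ioi (0:ℝ), Real.exp (-x) * Real.log (1 + γ₀ * x) := by
      rw [← setIntegral_eq_integral_of_forall_compl_eq_zero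
        (s := Ici (0:ℝ)) (fun x hx => by
          simp only [mem_Ici, not_le] at hx
          simp [gammaPDFReal, not_le.mpr hx]),
        integral_Ici_eq_integral_Ioi]
      refine setIntegral_congr_fun measurableSet_Ioi (fun x hx => ?_)
      have hx0 : (0:ℝ) < x := hx
      simp [gammaPDFReal, hx0.le, Real.Gamma_one, sub_self, Real.rpow_zero]
    have h4 : ∫ x in Ioi (0:ℝ), Real.exp (-x) * Real.log (1 + γ₀ * x)
        = ∫ x in Ioi (0:ℝ),
            (Real.exp (-x) * Real.log γ₀ + Real.exp (-x) * Real.log (γ₀⁻¹ + x)) := by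
      refine setIntegral_congr_fun measurableSet_Ioi (fun x hx => ?_)
      have hx0 : (0:ℝ) < x := hx
      have hrw : 1 + γ₀ * x = γ₀ * (γ₀⁻¹ + x) := by
        field_simp
      rw [hrw, Real.log_mul hγ0.ne' (by positivity)]
      ring
    -- integrability of the two pieces
    have hexp : IntegrableOn (fun x : ℝ => Real.exp (-x)) (Ioi 0) := by
      refine IntegrableOn.congr_fun (exp_neg_integrableOn_Ioi 0 one_pos)
        (fun x _ => by norm_num) measurableSet_Ioi
    have hA : IntegrableOn (fun x : ℝ => Real.exp (-x) * Real.log γ₀) (Ioi 0) :=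
      hexp.mul_const _
    have hB : IntegrableOn (fun x : ℝ => Real.exp (-x) * Real.log (γ₀⁻¹ + x)) (Ioi 0) := by
      refine bound_integrable'.mono' ?_ ?_
      · exact ((Real.measurable_exp.comp measurable_neg).mul
          (Real.measurable_log.comp (measurable_const.add measurable_id))).aestronglyMeasurable
      · rw [ae_restrict_iff' measurableSet_Ioi]
        refine Filter.Eventually.of_forall (fun x hx => ?_)
        have hx0 : (0:ℝ) < x := hx
        rw [Real.norm_eq_abs, abs_mul, abs_of_pos (Real.exp_pos _)]
        exact mul_le_mul_of_nonneg_left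
          (abs_log_add_le (inv_pos.mpr hγ0) (inv_le_one_of_one_le₀ hγ) hx0) (Real.exp_pos _).le
    rw [h1, hlaw, h2, h3, h4, integral_add hA hB, integral_mul_const,
      integral_exp_neg_Ioi_zero, one_mul]
    ring
  -- Step 2: dominated convergence.
  have hlim : Tendsto (fun γ₀ : ℝ => ∫ x in Ioi (0:ℝ), Real.exp (-x) * Real.log (γ₀⁻¹ + x))
      atTop (nhds (∫ x in Ioi (0:ℝ), Real.exp (-x) * Real.log x)) := by
    refine tendsto_integral_filter_of_dominated_convergence
      (fun x => Real.exp (-x) * (|Real.log x| + x)) ?_ ?_ bound_integrable' ?_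
    · refine Filter.Eventually.of_forall (fun γ₀ => ?_)
      exact ((Real.measurable_exp.comp measurable_neg).mul
        (Real.measurable_log.comp (measurable_const.add measurable_id))).aestronglyMeasurable
    · filter_upwards [eventually_ge_atTop (1:ℝ)] with γ₀ hγ
      have hγ0 : (0:ℝ) < γ₀ := lt_of_lt_of_le one_pos hγ
      rw [ae_restrict_iff' measurableSet_Ioi]
      refine Filter.Eventually.of_forall (fun x hx => ?_)
      have hx0 : (0:ℝ) < x := hx
      rw [Real.norm_eq_abs, abs_mul, abs_of_pos (Real.exp_pos _)]
      exact mul_le_mul_of_nonneg_left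
        (abs_log_add_le (inv_pos.mpr hγ0) (inv_le_one_of_one_le₀ hγ) hx0) (Real.exp_pos _).le
    · rw [ae_restrict_iff' measurableSet_Ioi]
      refine Filter.Eventually.of_forall (fun x hx => ?_)
      have hx0 : (0:ℝ) < x := hx
      refine tendsto_const_nhds.mul ?_
      have h5 : Tendsto (fun γ₀ : ℝ => γ₀⁻¹ + x) atTop (nhds x) := by
        simpa using tendsto_inv_atTop_zero.add (tendsto_const_nhds (x := x))
      exact ((Real.continuousAt_log hx0.ne').tendsto.comp h5)
  have hfinal : (∫ x in Ioi (0:ℝ), Real.exp (-x) * Real.log x)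
      = -Real.eulerMascheroniConstant := by
    rw [← integral_log_mul_exp]
    exact setIntegral_congr_fun measurableSet_Ioi (fun x _ => mul_comm _ _)
  rw [hfinal] at hlim
  refine Tendsto.congr' ?_ hlim
  filter_upwards [eventually_ge_atTop (1:ℝ)] with γ₀ hγ using (key γ₀ hγ).symm
end
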